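/- arXiv:1612.06278 — 2 statements merged into one kernel-verified Lean document; each statement's English description precedes it below -/
import Mathlib

section
/- Assume γ ∈ [0,2) and let Γ be a solution of the Bianchi class B system converging to (s, 1−s², 0, 0, 0) as τ → −∞, where s ∈ (1/2, 1], and suppose Δ(τ)N₊(τ) < 0 for all τ ≤ τ₀. Set Π̄ := min(6−3γ, 4+4s−4√(3(1−s²))) if Ω is not identically 0, and Π̄ := 4+4s−4√(3(1−s²)) if Ω ≡ 0. Then for every ε > 0, as τ → −∞: Σ₊ = s + O(e^{(Π̄−ε)τ}), Σ̃ = 1−s² + O(e^{(Π̄−ε)τ}), Δ = O(e^{(2+2s−2√(3(1−s²))−ε)τ}), N₊ = O(e^{(2+2s−2√(3(1−s²))−ε)τ}), Ñ = O(e^{(4+4s−4√(3(1−s²))−ε)τ}), and q = 2 + O(e^{(Π̄−ε)τ}). If moreover s ∈ (1/2, 1), then for every ε > 0 there is τ_ε such that for all τ ≤ τ_ε: e^{(2+2s−2√(3(1−s²))+ε)τ} ≤ |Δ(τ)| and e^{(2+2s−2√(3(1−s²))+ε)τ} ≤ |N₊(τ)|. -/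
open Real Filter Topology MeasureTheory

noncomputable def NT (κ : ℝ) (Ap Np : ℝ → ℝ) (τ : ℝ) : ℝ :=
  (1/3) * ((Np τ)^2 - κ * Ap τ)

noncomputable def qF (γ κ : ℝ) (Sp St Ap Np : ℝ → ℝ) (τ : ℝ) : ℝ :=
  (3/2)*(2-γ)*((Sp τ)^2 + St τ) + (1/2)*(3*γ-2)*(1 - Ap τ - NT κ Ap Np τ)

noncomputable def OmF (κ : ℝ) (Sp St Ap Np : ℝ → ℝ) (τ : ℝ) : ℝ :=
  1 - (Sp τ)^2 - St τ - Ap τ - NT κ Ap Np τ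

/-- A solution of the Bianchi class B system in expansion-normalised variables. -/
structure BianchiB (γ κ : ℝ) (Sp St Dl Ap Np : ℝ → ℝ) : Prop where
  hγ : γ ∈ Set.Icc (0:ℝ) 2
  diff_Sp : Differentiable ℝ Sp
  diff_St : Differentiable ℝ St
  diff_Dl : Differentiable ℝ Dl
  diff_Ap : Differentiable ℝ Ap
  diff_Np : Differentiable ℝ Np
  ev_Sp : ∀ τ, deriv Sp τ = (qF γ κ Sp St Ap Np τ - 2) * Sp τ - 2 * NT κ Ap Np τ
  ev_St : ∀ τ, deriv St τ =
    2*(qF γ κ Sp St Ap Np τ - 2) * St τ - 4 * Sp τ * Ap τ - 4 * Dl τ * Np τ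
  ev_Dl : ∀ τ, deriv Dl τ =
    2*(qF γ κ Sp St Ap Np τ + Sp τ - 1) * Dl τ + 2*(St τ - NT κ Ap Np τ) * Np τ
  ev_Ap : ∀ τ, deriv Ap τ = 2*(qF γ κ Sp St Ap Np τ + 2*Sp τ) * Ap τ
  ev_Np : ∀ τ, deriv Np τ = (qF γ κ Sp St Ap Np τ + 2*Sp τ) * Np τ + 6 * Dl τ
  con_main : ∀ τ, St τ * NT κ Ap Np τ - (Dl τ)^2 - (Sp τ)^2 * Ap τ = 0
  con_St : ∀ τ, 0 ≤ St τ
  con_Ap : ∀ τ, 0 ≤ Ap τ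
  con_NT : ∀ τ, 0 ≤ NT κ Ap Np τ
  con_sum : ∀ τ, (Sp τ)^2 + St τ + Ap τ + NT κ Ap Np τ ≤ 1

def Vacuum (κ : ℝ) (Sp St Ap Np : ℝ → ℝ) : Prop :=
  ∀ τ, OmF κ Sp St Ap Np τ = 0

def Inflationary (γ κ : ℝ) (Sp St Ap Np : ℝ → ℝ) : Prop :=
  (∀ τ, 0 < OmF κ Sp St Ap Np τ) ∧ γ ∈ Set.Ico (0:ℝ) (2/3)

def traj (Sp St Dl Ap Np : ℝ → ℝ) (τ : ℝ) : ℝ × ℝ × ℝ × ℝ × ℝ :=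
  (Sp τ, St τ, Dl τ, Ap τ, Np τ)

def AlphaLimitPt (Sp St Dl Ap Np : ℝ → ℝ) (p : ℝ × ℝ × ℝ × ℝ × ℝ) : Prop :=
  ∃ t : ℕ → ℝ, Tendsto t atTop atBot ∧
    Tendsto (fun n => traj Sp St Dl Ap Np (t n)) atTop (𝓝 p)

def Kasner : Set (ℝ × ℝ × ℝ × ℝ × ℝ) :=
  {p | ∃ s, s ∈ Set.Icc (-1:ℝ) 1 ∧ p = (s, 1 - s^2, 0, 0, 0)}

def PlaneWave (κ : ℝ) : Set (ℝ × ℝ × ℝ × ℝ × ℝ) :=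
  {p | ∃ s n : ℝ, -1 < s ∧ n^2 = (1+s)*(κ*(1+s) - 3*s) ∧ p = (s, -s*(1+s), 0, (1+s)^2, n)}

def IsConstSol (Sp St Dl Ap Np : ℝ → ℝ) : Prop :=
  ∀ τ, traj Sp St Dl Ap Np τ = traj Sp St Dl Ap Np 0

/-- `BigO f a` : `f = O(e^{a τ})` as `τ → −∞`. -/
def BigO (f : ℝ → ℝ) (a : ℝ) : Prop :=
  ∃ C > 0, ∃ τ₀ : ℝ, ∀ τ ≤ τ₀, |f τ| ≤ C * Real.exp (a * τ)

open scoped Classical in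
noncomputable def PiVal (γ s : ℝ) (vac : Prop) : ℝ :=
  if vac then 4 + 4*s else min (6 - 3*γ) (4 + 4*s)

open scoped Classical in
noncomputable def PiBarVal (γ s : ℝ) (vac : Prop) : ℝ :=
  if vac then 4 + 4*s - 4*Real.sqrt (3*(1-s^2))
  else min (6 - 3*γ) (4 + 4*s - 4*Real.sqrt (3*(1-s^2)))

namespace BigO

lemma mono {f : ℝ → ℝ} {a b : ℝ} (h : BigO f a) (hba : b ≤ a) : BigO f b := by
  obtain ⟨C, hC, T, hT⟩ := h
  refine ⟨C, hC, min T 0, fun τ hτ => ?_⟩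
  refine (hT τ (hτ.trans (min_le_left _ _))).trans ?_
  have h1 : a * τ ≤ b * τ := by
    have hτ0 : τ ≤ 0 := hτ.trans (min_le_right _ _)
    nlinarith
  exact mul_le_mul_of_nonneg_left (Real.exp_le_exp.2 h1) hC.le

lemma add {f g : ℝ → ℝ} {a : ℝ} (hf : BigO f a) (hg : BigO g a) :
    BigO (fun τ => f τ + g τ) a := by
  obtain ⟨C, hC, T, hT⟩ := hf
  obtain ⟨D, hD, S, hS⟩ := hg
  refine ⟨C + D, by linarith, min T S, fun τ hτ => ?_⟩
  have h1 := hT τ (hτ.trans (min_le_left _ _))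
  have h2 := hS τ (hτ.trans (min_le_right _ _))
  calc |f τ + g τ| ≤ |f τ| + |g τ| := abs_add_le _ _
    _ ≤ (C + D) * Real.exp (a * τ) := by rw [add_mul]; exact add_le_add h1 h2

lemma cmul {f : ℝ → ℝ} {a : ℝ} (k : ℝ) (hf : BigO f a) :
    BigO (fun τ => k * f τ) a := by
  obtain ⟨C, hC, T, hT⟩ := hf
  refine ⟨(|k| + 1) * C, by positivity, T, fun τ hτ => ?_⟩
  rw [abs_mul, mul_assoc]
  have h2 : |k| * |f τ| ≤ |k| * (C * Real.exp (a * τ)) :=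
    mul_le_mul_of_nonneg_left (hT τ hτ) (abs_nonneg k)
  refine h2.trans ?_
  have h3 : (0:ℝ) ≤ C * Real.exp (a * τ) := by positivity
  nlinarith [abs_nonneg k]

lemma of_le {f g : ℝ → ℝ} {a : ℝ} (hg : BigO g a) (hfg : ∀ τ, |f τ| ≤ |g τ|) :
    BigO f a := by
  obtain ⟨C, hC, T, hT⟩ := hg
  exact ⟨C, hC, T, fun τ hτ => (hfg τ).trans (hT τ hτ)⟩

lemma congr {f g : ℝ → ℝ} {a : ℝ} (hg : BigO g a) (hfg : ∀ τ, f τ = g τ) :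
    BigO f a := of_le hg (fun τ => by rw [hfg τ])

end BigO

lemma hasDerivAt_expneg (a x : ℝ) :
    HasDerivAt (fun τ : ℝ => Real.exp (-(a * τ))) (-a * Real.exp (-(a * x))) x := by
  have h1 : HasDerivAt (fun τ : ℝ => -(a * τ)) (-a) x := by
    simpa using ((hasDerivAt_id x).const_mul a).fun_neg
  simpa [mul_comm, Function.comp_def] using (Real.hasDerivAt_exp (-(a * x))).comp x h1

/-- Gronwall-type monotonicity. -/
lemma monoExp {f f' : ℝ → ℝ} {a T : ℝ} (hf : ∀ x, HasDerivAt f (f' x) x)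
    (h : ∀ τ ≤ T, a * f τ ≤ f' τ) :
    ∀ τ ≤ T, f τ * Real.exp (-(a * τ)) ≤ f T * Real.exp (-(a * T)) := by
  set g := fun τ => f τ * Real.exp (-(a * τ)) with hg
  have hg' : ∀ x, HasDerivAt g ((f' x - a * f x) * Real.exp (-(a * x))) x := by
    intro x
    have := (hf x).fun_mul (hasDerivAt_expneg a x)
    exact this.congr_deriv (by ring)
  have hmono : MonotoneOn g (Set.Iic T) := by
    apply monotoneOn_of_deriv_nonneg (convex_Iic T)
      (fun x _ => ((hg' x).continuousAt).continuousWithinAt)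
      (fun x _ => ((hg' x).differentiableAt).differentiableWithinAt)
    intro x hx
    rw [interior_Iic] at hx
    rw [(hg' x).deriv]
    have := h x hx.le
    exact mul_nonneg (by linarith) (Real.exp_nonneg _)
  intro τ hτ
  exact hmono hτ Set.self_mem_Iic hτ

lemma gronPos {f f' : ℝ → ℝ} {b T : ℝ} (hf : ∀ x, HasDerivAt f (f' x) x)
    (h0 : ∀ τ, 0 ≤ f τ) (h : ∀ τ ≤ T, b * f τ ≤ f' τ) :
    ∃ C > 0, ∀ τ ≤ T, |f τ| ≤ C * Real.exp (b * τ) := by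
  refine ⟨f T * Real.exp (-(b*T)) + 1, by have := h0 T; positivity, fun τ hτ => ?_⟩
  have h1 := monoExp hf h τ hτ
  rw [abs_of_nonneg (h0 τ)]
  have h3 := mul_le_mul_of_nonneg_right h1 (Real.exp_pos (b*τ)).le
  rw [mul_assoc, ← Real.exp_add, neg_add_cancel, Real.exp_zero, mul_one] at h3
  refine h3.trans ?_
  nlinarith [(Real.exp_pos (b*τ)).le]

/-- If `|f'| ≤ C e^{aτ}` on `Iic T` with `a > 0` and `f → L` at `-∞`, then
`|f − L| ≤ (C/a) e^{aτ}` on `Iic T`. -/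
lemma tendL {f f' : ℝ → ℝ} {C a L T : ℝ} (hf : ∀ x, HasDerivAt f (f' x) x) (ha : 0 < a)
    (hL : Tendsto f atBot (𝓝 L)) (hb : ∀ τ ≤ T, |f' τ| ≤ C * Real.exp (a * τ)) :
    ∀ τ ≤ T, |f τ - L| ≤ C / a * Real.exp (a * τ) := by
  have hexp : ∀ x : ℝ, HasDerivAt (fun τ => C / a * Real.exp (a * τ)) (C * Real.exp (a * x)) x := by
    intro x
    have h1 : HasDerivAt (fun τ : ℝ => a * τ) a x := by simpa using (hasDerivAt_id x).const_mul a
    have := ((Real.hasDerivAt_exp (a * x)).comp x h1).const_mul (C / a)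
    exact this.congr_deriv (by field_simp)
  have hlim0 : Tendsto (fun τ => C / a * Real.exp (a * τ)) atBot (𝓝 0) := by
    have h1 : Tendsto (fun τ : ℝ => a * τ) atBot atBot :=
      Tendsto.const_mul_atBot ha tendsto_id
    have := Real.tendsto_exp_atBot.comp h1
    simpa using (this.const_mul (C / a))
  intro τ hτ
  rw [abs_le]
  constructor
  · have hg : ∀ x, HasDerivAt (fun τ => f τ + C / a * Real.exp (a * τ)) (f' x + C * Real.exp (a * x)) x :=
      fun x => (hf x).add (hexp x)
    have hmono : MonotoneOn (fun τ => f τ + C / a * Real.exp (a * τ)) (Set.Iic T) := by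
      apply monotoneOn_of_deriv_nonneg (convex_Iic T)
        (fun x _ => ((hg x).continuousAt).continuousWithinAt)
        (fun x _ => ((hg x).differentiableAt).differentiableWithinAt)
      intro x hx
      rw [interior_Iic] at hx
      rw [(hg x).deriv]
      have := abs_le.1 (hb x hx.le)
      linarith [this.1]
    have hlim : Tendsto (fun τ => f τ + C / a * Real.exp (a * τ)) atBot (𝓝 L) := by
      simpa using hL.add hlim0
    have : L ≤ f τ + C / a * Real.exp (a * τ) := by
      apply le_of_tendsto hlim
      filter_upwards [eventually_le_atBot τ] with τ' hτ'
      exact hmono (hτ'.trans hτ) hτ hτ'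
    linarith
  · have hg : ∀ x, HasDerivAt (fun τ => f τ - C / a * Real.exp (a * τ)) (f' x - C * Real.exp (a * x)) x :=
      fun x => (hf x).sub (hexp x)
    have hanti : AntitoneOn (fun τ => f τ - C / a * Real.exp (a * τ)) (Set.Iic T) := by
      apply antitoneOn_of_deriv_nonpos (convex_Iic T)
        (fun x _ => ((hg x).continuousAt).continuousWithinAt)
        (fun x _ => ((hg x).differentiableAt).differentiableWithinAt)
      intro x hx
      rw [interior_Iic] at hx
      rw [(hg x).deriv]
      have := abs_le.1 (hb x hx.le)
      linarith [this.2]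
    have hlim : Tendsto (fun τ => f τ - C / a * Real.exp (a * τ)) atBot (𝓝 L) := by
      simpa using hL.sub hlim0
    have : f τ - C / a * Real.exp (a * τ) ≤ L := by
      apply ge_of_tendsto hlim
      filter_upwards [eventually_le_atBot τ] with τ' hτ'
      exact hanti (hτ'.trans hτ) hτ hτ'
    linarith

lemma sqrt_add_le' (a b : ℝ) (ha : 0 ≤ a) (hb : 0 ≤ b) :
    Real.sqrt (a + b) ≤ Real.sqrt a + Real.sqrt b := by
  have h1 : a + b ≤ (Real.sqrt a + Real.sqrt b)^2 := by
    nlinarith [Real.sq_sqrt ha, Real.sq_sqrt hb, Real.sqrt_nonneg a, Real.sqrt_nonneg b,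
      mul_nonneg (Real.sqrt_nonneg a) (Real.sqrt_nonneg b)]
  calc Real.sqrt (a + b) ≤ Real.sqrt ((Real.sqrt a + Real.sqrt b)^2) := Real.sqrt_le_sqrt h1
    _ = Real.sqrt a + Real.sqrt b := Real.sqrt_sq (by positivity)

lemma sqrt_exp' (x : ℝ) : Real.sqrt (Real.exp x) = Real.exp (x / 2) := by
  rw [show Real.exp x = (Real.exp (x / 2))^2 by rw [sq, ← Real.exp_add]; ring_nf]
  exact Real.sqrt_sq (Real.exp_nonneg _)

lemma amgm (c x y : ℝ) (hc : 0 ≤ c) :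
    2 * Real.sqrt (3 * c) * |x * y| ≤ 3 * x^2 + c * y^2 := by
  have h3 : (0:ℝ) ≤ 3 := by norm_num
  have hs : Real.sqrt (3 * c) = Real.sqrt 3 * Real.sqrt c := Real.sqrt_mul h3 c
  rcases abs_cases (x * y) with ⟨h, _⟩ | ⟨h, _⟩ <;> rw [h, hs] <;>
    nlinarith [sq_nonneg (Real.sqrt 3 * x - Real.sqrt c * y), sq_nonneg (Real.sqrt 3 * x + Real.sqrt c * y),
      Real.sq_sqrt h3, Real.sq_sqrt hc, Real.sqrt_nonneg (3:ℝ), Real.sqrt_nonneg c]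

lemma amgm2 (w x y : ℝ) (hw : 0 ≤ w) :
    2 * Real.sqrt (12 * w) * |x * y| ≤ 2 * w * y^2 + 6 * x^2 := by
  have h12 : Real.sqrt (12 * w) = Real.sqrt 6 * Real.sqrt (2 * w) := by
    rw [← Real.sqrt_mul (by norm_num : (0:ℝ) ≤ 6)]; ring_nf
  rcases abs_cases (x * y) with ⟨h, _⟩ | ⟨h, _⟩ <;> rw [h, h12] <;>
    nlinarith [sq_nonneg (Real.sqrt 6 * x - Real.sqrt (2 * w) * y),
      sq_nonneg (Real.sqrt 6 * x + Real.sqrt (2 * w) * y),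
      Real.sq_sqrt (by norm_num : (0:ℝ) ≤ 6), Real.sq_sqrt (by linarith : (0:ℝ) ≤ 2 * w),
      Real.sqrt_nonneg (6:ℝ), Real.sqrt_nonneg (2 * w)]

lemma abs_le_sqrt_mul_exp {x C A τ : ℝ} (hC : 0 ≤ C) (h : x^2 ≤ C * Real.exp (A * τ)) :
    |x| ≤ Real.sqrt C * Real.exp (A / 2 * τ) := by
  rw [← Real.sqrt_sq_eq_abs]
  calc Real.sqrt (x^2) ≤ Real.sqrt (C * Real.exp (A * τ)) := Real.sqrt_le_sqrt h
    _ = Real.sqrt C * Real.sqrt (Real.exp (A * τ)) := Real.sqrt_mul hC _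
    _ = Real.sqrt C * Real.exp (A / 2 * τ) := by rw [sqrt_exp', show A * τ / 2 = A / 2 * τ by ring]

set_option maxHeartbeats 2000000 in
theorem stmt13 (γ κ s τ₀ : ℝ) (Sp St Dl Ap Np : ℝ → ℝ)
    (hsol : BianchiB γ κ Sp St Dl Ap Np) (hγ2 : γ < 2)
    (hs : s ∈ Set.Ioc (1/2 : ℝ) 1)
    (hconv : Tendsto (traj Sp St Dl Ap Np) atBot
      (𝓝 ((s, 1 - s^2, 0, 0, 0) : ℝ × ℝ × ℝ × ℝ × ℝ)))
    (hsign : ∀ τ ≤ τ₀, Dl τ * Np τ < 0) :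
    (∀ ε > 0,
      BigO (fun τ => Sp τ - s) (PiBarVal γ s (Vacuum κ Sp St Ap Np) - ε) ∧
      BigO (fun τ => St τ - (1 - s^2)) (PiBarVal γ s (Vacuum κ Sp St Ap Np) - ε) ∧
      BigO (fun τ => Dl τ) (2 + 2*s - 2*Real.sqrt (3*(1 - s^2)) - ε) ∧
      BigO (fun τ => Np τ) (2 + 2*s - 2*Real.sqrt (3*(1 - s^2)) - ε) ∧
      BigO (fun τ => NT κ Ap Np τ) (4 + 4*s - 4*Real.sqrt (3*(1 - s^2)) - ε) ∧
      BigO (fun τ => qF γ κ Sp St Ap Np τ - 2)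
        (PiBarVal γ s (Vacuum κ Sp St Ap Np) - ε)) ∧
    (s < 1 → ∀ ε > 0, ∃ τε : ℝ, ∀ τ ≤ τε,
      Real.exp ((2 + 2*s - 2*Real.sqrt (3*(1 - s^2)) + ε)*τ) ≤ |Dl τ| ∧
      Real.exp ((2 + 2*s - 2*Real.sqrt (3*(1 - s^2)) + ε)*τ) ≤ |Np τ|) := by
  obtain ⟨hs1, hs2⟩ := hs
  set ρ : ℝ := Real.sqrt (3*(1 - s^2)) with hρdef
  have hs2' : (0:ℝ) ≤ 1 - s^2 := by nlinarith
  have hρ0 : 0 ≤ ρ := Real.sqrt_nonneg _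
  have hρsq : ρ^2 = 3*(1 - s^2) := Real.sq_sqrt (by linarith)
  have hρlt : ρ < 1 + s := by nlinarith
  -- component limits
  have hSpT : Tendsto Sp atBot (𝓝 s) := by
    simpa [traj, Function.comp_def] using (continuous_fst.tendsto _).comp hconv
  have hStT : Tendsto St atBot (𝓝 (1 - s^2)) := by
    simpa [traj, Function.comp_def] using ((continuous_fst.comp continuous_snd).tendsto _).comp hconv
  have hDlT : Tendsto Dl atBot (𝓝 0) := by
    simpa [traj, Function.comp_def] using
      ((continuous_fst.comp (continuous_snd.comp continuous_snd)).tendsto _).comp hconv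
  have hApT : Tendsto Ap atBot (𝓝 0) := by
    simpa [traj, Function.comp_def] using
      ((continuous_fst.comp (continuous_snd.comp (continuous_snd.comp continuous_snd))).tendsto _).comp hconv
  have hNpT : Tendsto Np atBot (𝓝 0) := by
    simpa [traj, Function.comp_def] using
      ((continuous_snd.comp (continuous_snd.comp (continuous_snd.comp continuous_snd))).tendsto _).comp hconv
  have hNTT : Tendsto (NT κ Ap Np) atBot (𝓝 0) := by
    have h1 : Tendsto (fun τ => (1/3 : ℝ) * ((Np τ)^2 - κ * Ap τ)) atBot
        (𝓝 ((1/3) * ((0:ℝ)^2 - κ * 0))) :=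
      (((hNpT.pow 2).sub (hApT.const_mul κ))).const_mul (1/3)
    have h2 : (1/3 : ℝ) * ((0:ℝ)^2 - κ * 0) = 0 := by ring
    rw [h2] at h1
    exact h1
  have hqT : Tendsto (qF γ κ Sp St Ap Np) atBot (𝓝 2) := by
    have h1 : Tendsto (fun τ => (3/2)*(2-γ)*((Sp τ)^2 + St τ) + (1/2)*(3*γ-2)*(1 - Ap τ - NT κ Ap Np τ))
        atBot (𝓝 ((3/2)*(2-γ)*(s^2 + (1 - s^2)) + (1/2)*(3*γ-2)*(1 - 0 - 0))) :=
      ((((hSpT.pow 2).add hStT).const_mul _)).add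
        ((((tendsto_const_nhds.sub hApT).sub hNTT)).const_mul _)
    have h2 : (3/2)*(2-γ)*(s^2 + (1 - s^2)) + (1/2)*(3*γ-2)*(1 - 0 - 0) = (2:ℝ) := by ring
    rw [h2] at h1
    exact h1
  -- pointwise constraint bounds
  have hSp1 : ∀ τ, |Sp τ| ≤ 1 := by
    intro τ
    rw [abs_le]
    constructor <;>
      nlinarith [hsol.con_St τ, hsol.con_Ap τ, hsol.con_NT τ, hsol.con_sum τ, sq_nonneg (Sp τ)]
  have hSt1 : ∀ τ, St τ ≤ 1 := by
    intro τ
    nlinarith [hsol.con_Ap τ, hsol.con_NT τ, hsol.con_sum τ, sq_nonneg (Sp τ)]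
  have hOmnn : ∀ τ, 0 ≤ OmF κ Sp St Ap Np τ := by
    intro τ
    have := hsol.con_sum τ
    simp only [OmF]
    linarith
  -- derivatives
  have dSp : ∀ x, HasDerivAt Sp ((qF γ κ Sp St Ap Np x - 2) * Sp x - 2 * NT κ Ap Np x) x :=
    fun x => hsol.ev_Sp x ▸ (hsol.diff_Sp x).hasDerivAt
  have dSt : ∀ x, HasDerivAt St
      (2*(qF γ κ Sp St Ap Np x - 2) * St x - 4 * Sp x * Ap x - 4 * Dl x * Np x) x :=
    fun x => hsol.ev_St x ▸ (hsol.diff_St x).hasDerivAt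
  have dDl : ∀ x, HasDerivAt Dl
      (2*(qF γ κ Sp St Ap Np x + Sp x - 1) * Dl x + 2*(St x - NT κ Ap Np x) * Np x) x :=
    fun x => hsol.ev_Dl x ▸ (hsol.diff_Dl x).hasDerivAt
  have dAp : ∀ x, HasDerivAt Ap (2*(qF γ κ Sp St Ap Np x + 2*Sp x) * Ap x) x :=
    fun x => hsol.ev_Ap x ▸ (hsol.diff_Ap x).hasDerivAt
  have dNp : ∀ x, HasDerivAt Np ((qF γ κ Sp St Ap Np x + 2*Sp x) * Np x + 6 * Dl x) x :=
    fun x => hsol.ev_Np x ▸ (hsol.diff_Np x).hasDerivAt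
  have dNT : ∀ x, HasDerivAt (NT κ Ap Np)
      (2*(qF γ κ Sp St Ap Np x + 2*Sp x) * NT κ Ap Np x + 4 * Dl x * Np x) x := by
    intro x
    have h2 : HasDerivAt (fun τ => (Np τ)^2)
        (2 * Np x * ((qF γ κ Sp St Ap Np x + 2*Sp x) * Np x + 6 * Dl x)) x := by
      have := (dNp x).fun_pow 2
      simpa [mul_comm, mul_assoc, mul_left_comm] using this
    have h1 : HasDerivAt (fun τ => (1/3 : ℝ) * ((Np τ)^2 - κ * Ap τ))
        ((1/3) * (2 * Np x * ((qF γ κ Sp St Ap Np x + 2*Sp x) * Np x + 6 * Dl x)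
          - κ * (2*(qF γ κ Sp St Ap Np x + 2*Sp x) * Ap x))) x :=
      ((h2.sub ((dAp x).const_mul κ))).const_mul (1/3)
    have h3 : (1/3 : ℝ) * (2 * Np x * ((qF γ κ Sp St Ap Np x + 2*Sp x) * Np x + 6 * Dl x)
          - κ * (2*(qF γ κ Sp St Ap Np x + 2*Sp x) * Ap x))
        = 2*(qF γ κ Sp St Ap Np x + 2*Sp x) * NT κ Ap Np x + 4 * Dl x * Np x := by
      simp only [NT]; ring
    rw [h3] at h1
    exact h1
  have dOm : ∀ x, HasDerivAt (OmF κ Sp St Ap Np)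
      ((2 * qF γ κ Sp St Ap Np x - (3*γ-2)) * OmF κ Sp St Ap Np x) x := by
    intro x
    have h2 : HasDerivAt (fun τ => (Sp τ)^2)
        (2 * Sp x * ((qF γ κ Sp St Ap Np x - 2) * Sp x - 2 * NT κ Ap Np x)) x := by
      have := (dSp x).fun_pow 2
      simpa [mul_comm, mul_assoc, mul_left_comm] using this
    have h1 : HasDerivAt (fun τ => 1 - (Sp τ)^2 - St τ - Ap τ - NT κ Ap Np τ)
        (0 - 2 * Sp x * ((qF γ κ Sp St Ap Np x - 2) * Sp x - 2 * NT κ Ap Np x)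
          - (2*(qF γ κ Sp St Ap Np x - 2) * St x - 4 * Sp x * Ap x - 4 * Dl x * Np x)
          - 2*(qF γ κ Sp St Ap Np x + 2*Sp x) * Ap x
          - (2*(qF γ κ Sp St Ap Np x + 2*Sp x) * NT κ Ap Np x + 4 * Dl x * Np x)) x :=
      ((((hasDerivAt_const x (1:ℝ)).sub h2).sub (dSt x)).sub (dAp x)).sub (dNT x)
    have h3 : (0 - 2 * Sp x * ((qF γ κ Sp St Ap Np x - 2) * Sp x - 2 * NT κ Ap Np x)
          - (2*(qF γ κ Sp St Ap Np x - 2) * St x - 4 * Sp x * Ap x - 4 * Dl x * Np x)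
          - 2*(qF γ κ Sp St Ap Np x + 2*Sp x) * Ap x
          - (2*(qF γ κ Sp St Ap Np x + 2*Sp x) * NT κ Ap Np x + 4 * Dl x * Np x))
        = (2 * qF γ κ Sp St Ap Np x - (3*γ-2)) * OmF κ Sp St Ap Np x := by
      simp only [qF, OmF, NT]; ring
    rw [h3] at h1
    exact h1
  have hqid : ∀ τ, qF γ κ Sp St Ap Np τ - 2
      = (3*γ-6)/2 * OmF κ Sp St Ap Np τ - 2 * Ap τ - 2 * NT κ Ap Np τ := by
    intro τ; simp only [qF, OmF, NT]; ring
  -- eventual bounds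
  have hev : ∀ θ > (0:ℝ), ∃ T, ∀ τ ≤ T, |qF γ κ Sp St Ap Np τ - 2| ≤ θ ∧ |Sp τ - s| ≤ θ ∧
      |St τ - (1 - s^2)| ≤ θ ∧ NT κ Ap Np τ ≤ θ := by
    intro θ hθ
    have h1 : ∀ᶠ τ in atBot, |qF γ κ Sp St Ap Np τ - 2| ≤ θ := by
      filter_upwards [Metric.tendsto_nhds.mp hqT θ hθ] with τ h
      rw [Real.dist_eq] at h; exact h.le
    have h2 : ∀ᶠ τ in atBot, |Sp τ - s| ≤ θ := by
      filter_upwards [Metric.tendsto_nhds.mp hSpT θ hθ] with τ h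
      rw [Real.dist_eq] at h; exact h.le
    have h3 : ∀ᶠ τ in atBot, |St τ - (1 - s^2)| ≤ θ := by
      filter_upwards [Metric.tendsto_nhds.mp hStT θ hθ] with τ h
      rw [Real.dist_eq] at h; exact h.le
    have h4 : ∀ᶠ τ in atBot, NT κ Ap Np τ ≤ θ := by
      filter_upwards [Metric.tendsto_nhds.mp hNTT θ hθ] with τ h
      rw [Real.dist_eq, sub_zero] at h
      exact (le_abs_self _).trans h.le
    exact eventually_atBot.1 (((h1.and h2).and (h3.and h4)).mono (fun τ h => ⟨h.1.1, h.1.2, h.2.1, h.2.2⟩))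
  -- core quadratic estimate
  have EB : ∀ ε : ℝ, 0 < ε → ε ≤ 1 → ∃ C > 0, ∃ T, ∀ τ ≤ T,
      (Dl τ)^2 ≤ C * Real.exp ((4+4*s-4*ρ-ε)*τ) ∧
      (Np τ)^2 ≤ C * Real.exp ((4+4*s-4*ρ-ε)*τ) := by
    intro ε hε hε1
    set a : ℝ := 4+4*s-4*ρ-ε with hadef
    set c : ℝ := 1 - s^2 + ε^2/768 with hcdef
    have hc0 : 0 < c := by positivity
    set w : ℝ := Real.sqrt (3*c) with hwdef
    have hscρ : ρ ≤ w := by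
      rw [hρdef, hwdef]
      apply Real.sqrt_le_sqrt
      rw [hcdef]; nlinarith
    have hscε : ε/16 ≤ w := by
      have h1 : Real.sqrt (ε^2/256) = ε/16 := by
        rw [show ε^2/256 = (ε/16)^2 by ring]
        exact Real.sqrt_sq (by positivity)
      rw [← h1, hwdef]
      apply Real.sqrt_le_sqrt
      rw [hcdef]; nlinarith
    have hsc0 : 0 ≤ w := Real.sqrt_nonneg _
    obtain ⟨T, hT⟩ := hev (ε^2/1536) (by positivity)
    set F : ℝ → ℝ := fun τ => 3*(Dl τ)^2 + c*(Np τ)^2 with hFdef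
    set G : ℝ → ℝ := fun x => 12*(qF γ κ Sp St Ap Np x + Sp x - 1)*(Dl x)^2
        + 2*c*(qF γ κ Sp St Ap Np x + 2*Sp x)*(Np x)^2
        + (12*(St x - NT κ Ap Np x) + 12*c)*(Dl x * Np x) with hGdef
    have dF : ∀ x, HasDerivAt F (G x) x := by
      intro x
      have h1 := (((dDl x).fun_pow 2).const_mul 3).fun_add (((dNp x).fun_pow 2).const_mul c)
      refine h1.congr_deriv ?_
      simp only [hGdef]
      ring
    have key : ∀ τ ≤ T, a * F τ ≤ G τ := by
      intro τ hτ
      obtain ⟨hq, hsp, hst, hnt⟩ := hT τ hτ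
      simp only [hFdef, hGdef]
      have hq1 := abs_le.1 hq
      have hsp1 := abs_le.1 hsp
      have hst1 := abs_le.1 hst
      have hnt0 := hsol.con_NT τ
      have hAM := amgm c (Dl τ) (Np τ) hc0.le
      rw [← hwdef] at hAM
      set q : ℝ := qF γ κ Sp St Ap Np τ
      set x : ℝ := Dl τ
      set y : ℝ := Np τ
      set σ : ℝ := Sp τ
      set st : ℝ := St τ
      set n : ℝ := NT κ Ap Np τ
      clear_value a c w q x y σ st n
      have hρε0 : (0:ℝ) ≤ 4*ρ + ε/4 := by linarith
      have hD0 : 0 ≤ 12*(st - n) + 12*c := by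
        rw [hcdef]; nlinarith
      have hD1 : 12*(st - n) + 12*c ≤ (4*ρ + ε/4) * (2*w) := by
        have l1 : 8*ρ^2 ≤ 8*ρ*w := by nlinarith
        have l2 : ε^2/32 ≤ (ε/2)*w := by nlinarith
        have l3 : 12*(st - n) + 12*c ≤ 8*ρ^2 + 3*ε^2/128 := by
          rw [hcdef]; nlinarith [hρsq]
        nlinarith
      have hcross : -((4*ρ + ε/4) * (3*x^2 + c*y^2)) ≤ (12*(st - n) + 12*c)*(x*y) := by
        have l1 : (12*(st - n) + 12*c) * (-|x*y|) ≤ (12*(st - n) + 12*c)*(x*y) :=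
          mul_le_mul_of_nonneg_left (neg_abs_le _) hD0
        have l2 : (12*(st - n) + 12*c) * |x*y| ≤ ((4*ρ + ε/4) * (2*w)) * |x*y| :=
          mul_le_mul_of_nonneg_right hD1 (abs_nonneg _)
        have l3 : (4*ρ + ε/4) * (2*w*|x*y|) ≤ (4*ρ + ε/4) * (3*x^2 + c*y^2) :=
          mul_le_mul_of_nonneg_left hAM hρε0
        linarith
      have hd1 : 3*(4*ρ + ε/4) ≤ 12*(q + σ - 1) - 3*a := by
        rw [hadef]; nlinarith
      have hd2 : (4*ρ + ε/4) ≤ 2*(q + 2*σ) - a := by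
        rw [hadef]; nlinarith
      have e1 : (3*(4*ρ + ε/4))*x^2 ≤ (12*(q + σ - 1) - 3*a)*x^2 :=
        mul_le_mul_of_nonneg_right hd1 (sq_nonneg _)
      have e2 : (c*(4*ρ + ε/4))*y^2 ≤ (c*(2*(q + 2*σ) - a))*y^2 :=
        mul_le_mul_of_nonneg_right (mul_le_mul_of_nonneg_left hd2 hc0.le) (sq_nonneg _)
      linarith [e1, e2, hcross]
    have hmain := monoExp dF key
    set C₀ : ℝ := F T * Real.exp (-(a*T)) with hC₀def
    have hC₀0 : 0 ≤ C₀ := by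
      have : 0 ≤ F T := by simp only [hFdef]; positivity
      positivity
    refine ⟨(C₀+1)*(1+1/c), by positivity, T, fun τ hτ => ?_⟩
    have h1 := hmain τ hτ
    have h2 : F τ ≤ C₀ * Real.exp (a*τ) := by
      have h3 := mul_le_mul_of_nonneg_right h1 (Real.exp_pos (a*τ)).le
      rw [mul_assoc, ← Real.exp_add, neg_add_cancel, Real.exp_zero, mul_one] at h3
      exact h3
    have hFτ : F τ = 3*(Dl τ)^2 + c*(Np τ)^2 := rfl
    have hexp0 : 0 ≤ Real.exp (a*τ) := (Real.exp_pos _).le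
    constructor
    · have hd : (Dl τ)^2 ≤ F τ := by rw [hFτ]; nlinarith [sq_nonneg (Dl τ), sq_nonneg (Np τ)]
      have hCle : C₀ ≤ (C₀+1)*(1+1/c) := by
        have : 0 < 1/c := by positivity
        nlinarith
      calc (Dl τ)^2 ≤ C₀ * Real.exp (a*τ) := le_trans hd h2
        _ ≤ (C₀+1)*(1+1/c) * Real.exp (a*τ) := mul_le_mul_of_nonneg_right hCle hexp0
    · have hd : c*(Np τ)^2 ≤ F τ := by rw [hFτ]; nlinarith [sq_nonneg (Dl τ)]
      have hCle : C₀/c ≤ (C₀+1)*(1+1/c) := by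
        rw [div_le_iff₀ hc0]
        have hcc : (1/c)*c = 1 := by field_simp
        nlinarith [hcc, hc0, hC₀0]
      have hNp2 : (Np τ)^2 ≤ (C₀/c) * Real.exp (a*τ) := by
        rw [div_mul_eq_mul_div, le_div_iff₀ hc0]
        nlinarith
      calc (Np τ)^2 ≤ (C₀/c) * Real.exp (a*τ) := hNp2
        _ ≤ (C₀+1)*(1+1/c) * Real.exp (a*τ) := mul_le_mul_of_nonneg_right hCle hexp0
  -- individual decay of Dl and Np
  have hDlNpO : ∀ ε > (0:ℝ), BigO Dl (2+2*s-2*ρ-ε) ∧ BigO Np (2+2*s-2*ρ-ε) := by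
    intro ε hε
    set e : ℝ := min ε 1 with hedef
    have he0 : 0 < e := lt_min hε one_pos
    have he1 : e ≤ 1 := min_le_right _ _
    have heε : e ≤ ε := min_le_left _ _
    obtain ⟨C, hC, T, hT⟩ := EB e he0 he1
    have key : ∀ (f : ℝ → ℝ), (∀ τ ≤ T, (f τ)^2 ≤ C * Real.exp ((4+4*s-4*ρ-e)*τ)) →
        BigO f (2+2*s-2*ρ-ε) := by
      intro f hf
      have h1 : BigO f (2+2*s-2*ρ-e/2) := by
        refine ⟨Real.sqrt C + 1, by positivity, T, fun τ hτ => ?_⟩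
        have h2 := abs_le_sqrt_mul_exp hC.le (hf τ hτ)
        have h3 : (4+4*s-4*ρ-e)/2 = 2+2*s-2*ρ-e/2 := by ring
        rw [h3] at h2
        refine h2.trans ?_
        have := (Real.exp_pos ((2+2*s-2*ρ-e/2)*τ)).le
        nlinarith
      exact h1.mono (by linarith)
    exact ⟨key Dl (fun τ hτ => (hT τ hτ).1), key Np (fun τ hτ => (hT τ hτ).2)⟩
  have hDlO : ∀ ε > (0:ℝ), BigO Dl (2+2*s-2*ρ-ε) := fun ε hε => (hDlNpO ε hε).1
  have hNpO : ∀ ε > (0:ℝ), BigO Np (2+2*s-2*ρ-ε) := fun ε hε => (hDlNpO ε hε).2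
  -- product and square decay
  have hDNO : ∀ ε > (0:ℝ), BigO (fun τ => Dl τ * Np τ) (4+4*s-4*ρ-ε) := by
    intro ε hε
    set e : ℝ := min ε 1 with hedef
    have he0 : 0 < e := lt_min hε one_pos
    obtain ⟨C, hC, T, hT⟩ := EB e he0 (min_le_right _ _)
    have h1 : BigO (fun τ => Dl τ * Np τ) (4+4*s-4*ρ-e) := by
      refine ⟨C, hC, T, fun τ hτ => ?_⟩
      obtain ⟨ha1, ha2⟩ := hT τ hτ
      rw [abs_mul]
      nlinarith [abs_nonneg (Dl τ), abs_nonneg (Np τ), sq_abs (Dl τ), sq_abs (Np τ),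
        sq_nonneg (|Dl τ| - |Np τ|)]
    exact h1.mono (by have := min_le_left ε 1; linarith)
  have hNp2O : ∀ ε > (0:ℝ), BigO (fun τ => (Np τ)^2) (4+4*s-4*ρ-ε) := by
    intro ε hε
    set e : ℝ := min ε 1 with hedef
    have he0 : 0 < e := lt_min hε one_pos
    obtain ⟨C, hC, T, hT⟩ := EB e he0 (min_le_right _ _)
    have h1 : BigO (fun τ => (Np τ)^2) (4+4*s-4*ρ-e) := by
      refine ⟨C, hC, T, fun τ hτ => ?_⟩
      rw [abs_of_nonneg (sq_nonneg (Np τ))]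
      exact (hT τ hτ).2
    exact h1.mono (by have := min_le_left ε 1; linarith)
  -- decay of Ap
  have hApO : ∀ ε > (0:ℝ), BigO Ap (4+4*s-ε) := by
    intro ε hε
    obtain ⟨T, hT⟩ := hev (ε/6) (by positivity)
    have key : ∀ τ ≤ T, (4+4*s-ε) * Ap τ ≤ 2*(qF γ κ Sp St Ap Np τ + 2*Sp τ) * Ap τ := by
      intro τ hτ
      obtain ⟨hq, hsp, _, _⟩ := hT τ hτ
      have hq1 := abs_le.1 hq
      have hsp1 := abs_le.1 hsp
      exact mul_le_mul_of_nonneg_right (by linarith) (hsol.con_Ap τ)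
    obtain ⟨C, hC, hCb⟩ := gronPos dAp hsol.con_Ap key
    exact ⟨C, hC, T, hCb⟩
  -- decay of NT
  have hNTO : ∀ ε > (0:ℝ), BigO (fun τ => NT κ Ap Np τ) (4+4*s-4*ρ-ε) := by
    intro ε hε
    have hAp' : BigO Ap (4+4*s-4*ρ-ε) := (hApO ε hε).mono (by linarith)
    have h1 : BigO (fun τ => (Np τ)^2 + (-κ) * Ap τ) (4+4*s-4*ρ-ε) :=
      (hNp2O ε hε).add (hAp'.cmul (-κ))
    have h2 : BigO (fun τ => (1/3 : ℝ) * ((Np τ)^2 + (-κ) * Ap τ)) (4+4*s-4*ρ-ε) :=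
      h1.cmul (1/3)
    exact h2.congr (fun τ => by simp only [NT]; ring)
  -- decay of Omega
  have hOmO : ∀ ε > (0:ℝ), BigO (OmF κ Sp St Ap Np) (6-3*γ-ε) := by
    intro ε hε
    obtain ⟨T, hT⟩ := hev (ε/2) (by positivity)
    have key : ∀ τ ≤ T, (6-3*γ-ε) * OmF κ Sp St Ap Np τ
        ≤ (2 * qF γ κ Sp St Ap Np τ - (3*γ-2)) * OmF κ Sp St Ap Np τ := by
      intro τ hτ
      obtain ⟨hq, _, _, _⟩ := hT τ hτ
      have hq1 := abs_le.1 hq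
      exact mul_le_mul_of_nonneg_right (by linarith) (hOmnn τ)
    obtain ⟨C, hC, hCb⟩ := gronPos dOm hOmnn key
    exact ⟨C, hC, T, hCb⟩
  -- PiBar facts
  set Pb : ℝ := PiBarVal γ s (Vacuum κ Sp St Ap Np) with hPbdef
  have hρ4 : 4+4*s-4*ρ = 2*(2+2*s-2*ρ) := by ring
  have hPble : Pb ≤ 4+4*s-4*ρ := by
    rw [hPbdef]
    by_cases hvac : Vacuum κ Sp St Ap Np
    · rw [PiBarVal, if_pos hvac]
    · rw [PiBarVal, if_neg hvac]
      exact min_le_right _ _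
  have hPbpos : 0 < Pb := by
    rw [hPbdef]
    by_cases hvac : Vacuum κ Sp St Ap Np
    · rw [PiBarVal, if_pos hvac]; nlinarith
    · rw [PiBarVal, if_neg hvac]
      exact lt_min (by linarith) (by nlinarith)
  have hOmO' : ∀ ε > (0:ℝ), BigO (OmF κ Sp St Ap Np) (Pb - ε) := by
    intro ε hε
    by_cases hvac : Vacuum κ Sp St Ap Np
    · refine ⟨1, one_pos, 0, fun τ _ => ?_⟩
      rw [hvac τ, abs_zero]
      positivity
    · refine (hOmO ε hε).mono ?_
      have : Pb ≤ 6-3*γ := by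
        rw [hPbdef, PiBarVal, if_neg hvac]
        exact min_le_left _ _
      linarith
  have hqO : ∀ ε > (0:ℝ), BigO (fun τ => qF γ κ Sp St Ap Np τ - 2) (Pb - ε) := by
    intro ε hε
    have h1 : BigO (fun τ => (3*γ-6)/2 * OmF κ Sp St Ap Np τ) (Pb - ε) :=
      (hOmO' ε hε).cmul _
    have h2 : BigO (fun τ => (-2) * Ap τ) (Pb - ε) :=
      ((hApO ε hε).mono (by linarith)).cmul _
    have h3 : BigO (fun τ => (-2) * NT κ Ap Np τ) (Pb - ε) :=
      ((hNTO ε hε).mono (by linarith)).cmul _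
    refine ((h1.add h2).add h3).congr (fun τ => ?_)
    rw [hqid τ]; ring
  -- Sp and St estimates
  have hSpO : ∀ ε > (0:ℝ), BigO (fun τ => Sp τ - s) (Pb - ε) := by
    have inner : ∀ ε, 0 < ε → ε ≤ Pb/2 → BigO (fun τ => Sp τ - s) (Pb - ε) := by
      intro ε hε hεP
      have ha : 0 < Pb - ε := by linarith
      have b1 : BigO (fun τ => |qF γ κ Sp St Ap Np τ - 2|) (Pb - ε) :=
        BigO.of_le (hqO ε hε) (fun τ => by rw [abs_abs])
      have b2 : BigO (fun τ => 2 * NT κ Ap Np τ) (Pb - ε) :=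
        ((hNTO ε hε).mono (by linarith)).cmul 2
      have bf : BigO (fun τ => (qF γ κ Sp St Ap Np τ - 2) * Sp τ - 2 * NT κ Ap Np τ) (Pb - ε) := by
        refine BigO.of_le (b1.add b2) (fun τ => ?_)
        have hnt0 := hsol.con_NT τ
        have h1 : |(qF γ κ Sp St Ap Np τ - 2) * Sp τ - 2 * NT κ Ap Np τ|
            ≤ |qF γ κ Sp St Ap Np τ - 2| * |Sp τ| + 2 * NT κ Ap Np τ := by
          calc |(qF γ κ Sp St Ap Np τ - 2) * Sp τ - 2 * NT κ Ap Np τ|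
              ≤ |(qF γ κ Sp St Ap Np τ - 2) * Sp τ| + |2 * NT κ Ap Np τ| := abs_sub _ _
            _ = |qF γ κ Sp St Ap Np τ - 2| * |Sp τ| + 2 * NT κ Ap Np τ := by
                rw [abs_mul, abs_mul, abs_of_nonneg hnt0]; norm_num
        have h2 : |qF γ κ Sp St Ap Np τ - 2| * |Sp τ| ≤ |qF γ κ Sp St Ap Np τ - 2| :=
          (mul_le_of_le_one_right (abs_nonneg _) (hSp1 τ))
        have h3 : 0 ≤ |qF γ κ Sp St Ap Np τ - 2| + 2 * NT κ Ap Np τ := by positivity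
        rw [abs_of_nonneg h3]
        linarith
      obtain ⟨C, hC, T, hT⟩ := bf
      have := tendL dSp ha hSpT hT
      exact ⟨C/(Pb-ε), by positivity, T, this⟩
    intro ε hε
    rcases le_or_gt ε (Pb/2) with h | h
    · exact inner ε hε h
    · exact (inner (Pb/2) (by linarith) le_rfl).mono (by linarith)
  have hStO : ∀ ε > (0:ℝ), BigO (fun τ => St τ - (1 - s^2)) (Pb - ε) := by
    have inner : ∀ ε, 0 < ε → ε ≤ Pb/2 → BigO (fun τ => St τ - (1 - s^2)) (Pb - ε) := by
      intro ε hε hεP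
      have ha : 0 < Pb - ε := by linarith
      have b1 : BigO (fun τ => 2 * |qF γ κ Sp St Ap Np τ - 2|) (Pb - ε) :=
        (BigO.of_le (hqO ε hε) (fun τ => by rw [abs_abs])).cmul 2
      have b2 : BigO (fun τ => 4 * Ap τ) (Pb - ε) :=
        ((hApO ε hε).mono (by linarith)).cmul 4
      have b3 : BigO (fun τ => 4 * |Dl τ * Np τ|) (Pb - ε) :=
        ((BigO.of_le (hDNO ε hε) (fun τ => by rw [abs_abs])).mono (by linarith)).cmul 4
      have bf : BigO (fun τ => 2*(qF γ κ Sp St Ap Np τ - 2) * St τ - 4 * Sp τ * Ap τ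
          - 4 * Dl τ * Np τ) (Pb - ε) := by
        refine BigO.of_le ((b1.add b2).add b3) (fun τ => ?_)
        have hap0 := hsol.con_Ap τ
        have hst0 := hsol.con_St τ
        have hst1 := hSt1 τ
        have hsp1 := hSp1 τ
        have h3 : 0 ≤ 2 * |qF γ κ Sp St Ap Np τ - 2| + 4 * Ap τ + 4 * |Dl τ * Np τ| := by positivity
        rw [abs_of_nonneg h3]
        have t1 : |2*(qF γ κ Sp St Ap Np τ - 2) * St τ| ≤ 2 * |qF γ κ Sp St Ap Np τ - 2| := by
          rw [abs_mul, abs_mul]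
          rw [abs_of_nonneg hst0]
          have : |(2:ℝ)| = 2 := by norm_num
          rw [this]
          nlinarith [abs_nonneg (qF γ κ Sp St Ap Np τ - 2)]
        have t2 : |4 * Sp τ * Ap τ| ≤ 4 * Ap τ := by
          rw [abs_mul, abs_mul, abs_of_nonneg hap0]
          have : |(4:ℝ)| = 4 := by norm_num
          rw [this]
          nlinarith
        have t3 : |4 * Dl τ * Np τ| = 4 * |Dl τ * Np τ| := by
          rw [mul_assoc, abs_mul]
          norm_num
        calc |2*(qF γ κ Sp St Ap Np τ - 2) * St τ - 4 * Sp τ * Ap τ - 4 * Dl τ * Np τ|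
            ≤ |2*(qF γ κ Sp St Ap Np τ - 2) * St τ| + |4 * Sp τ * Ap τ| + |4 * Dl τ * Np τ| := by
              have := abs_sub (2*(qF γ κ Sp St Ap Np τ - 2) * St τ - 4 * Sp τ * Ap τ) (4 * Dl τ * Np τ)
              have := abs_sub (2*(qF γ κ Sp St Ap Np τ - 2) * St τ) (4 * Sp τ * Ap τ)
              linarith
          _ ≤ 2 * |qF γ κ Sp St Ap Np τ - 2| + 4 * Ap τ + 4 * |Dl τ * Np τ| := by
              rw [t3]; linarith
      obtain ⟨C, hC, T, hT⟩ := bf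
      have := tendL dSt ha hStT hT
      exact ⟨C/(Pb-ε), by positivity, T, this⟩
    intro ε hε
    rcases le_or_gt ε (Pb/2) with h | h
    · exact inner ε hε h
    · exact (inner (Pb/2) (by linarith) le_rfl).mono (by linarith)
  constructor
  · intro ε hε
    exact ⟨hSpO ε hε, hStO ε hε, hDlO ε hε, hNpO ε hε, hNTO ε hε, hqO ε hε⟩
  · -- lower bounds
    intro hs3 ε hε
    have hw1 : 0 < 1 - s^2 := by nlinarith
    set δ : ℝ := min (min (ε/56) (ε^2/6144)) ((1-s^2)/4) with hδdef
    have hδ0 : 0 < δ := lt_min (lt_min (by positivity) (by positivity)) (by positivity)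
    have hδ1 : δ ≤ ε/56 := le_trans (min_le_left _ _) (min_le_left _ _)
    have hδ2 : δ ≤ ε^2/6144 := le_trans (min_le_left _ _) (min_le_right _ _)
    have hδ3 : δ ≤ (1-s^2)/4 := min_le_right _ _
    obtain ⟨T₁', hT₁⟩ := hev δ hδ0
    set T₁ : ℝ := min T₁' τ₀ with hT₁def
    set w₀ : ℝ := 1 - s^2 - 2*δ with hw₀def
    have hw₀0 : 0 < w₀ := by rw [hw₀def]; linarith
    have dP : ∀ x, HasDerivAt (fun τ => Dl τ * Np τ)
        ((3*qF γ κ Sp St Ap Np x + 4*Sp x - 2)*(Dl x*Np x)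
          + (2*(St x - NT κ Ap Np x)*(Np x)^2 + 6*(Dl x)^2)) x := by
      intro x
      have h1 := (dDl x).fun_mul (dNp x)
      exact h1.congr_deriv (by ring)
    have hsq12 : Real.sqrt (12*(1-s^2)) = 2*ρ := by
      rw [show 12*(1-s^2) = 2^2*(3*(1-s^2)) by ring, Real.sqrt_mul (by positivity) _,
        Real.sqrt_sq (by norm_num : (0:ℝ) ≤ 2), hρdef]
    have hsqδ : Real.sqrt (24*δ) ≤ ε/16 := by
      have h1 : Real.sqrt (ε^2/256) = ε/16 := by
        rw [show ε^2/256 = (ε/16)^2 by ring]; exact Real.sqrt_sq (by positivity)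
      rw [← h1]; apply Real.sqrt_le_sqrt; nlinarith
    have hsqw : 4*ρ - ε/8 ≤ 2*Real.sqrt (12*w₀) := by
      have h1 : Real.sqrt (12*(1-s^2)) ≤ Real.sqrt (12*w₀) + Real.sqrt (24*δ) := by
        rw [show 12*(1-s^2) = 12*w₀ + 24*δ by rw [hw₀def]; ring]
        exact sqrt_add_le' _ _ (by positivity) (by positivity)
      rw [hsq12] at h1
      linarith
    set a₂ : ℝ := 4+4*s-4*ρ+ε/4 with ha₂def
    have keyP : ∀ τ ≤ T₁, a₂ * (Dl τ * Np τ) ≤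
        (3*qF γ κ Sp St Ap Np τ + 4*Sp τ - 2)*(Dl τ*Np τ)
          + (2*(St τ - NT κ Ap Np τ)*(Np τ)^2 + 6*(Dl τ)^2) := by
      intro τ hτ
      obtain ⟨hq, hsp, hst, hnt⟩ := hT₁ τ (le_trans hτ (min_le_left _ _))
      have hPneg : Dl τ * Np τ < 0 := hsign τ (le_trans hτ (min_le_right _ _))
      have hq1 := abs_le.1 hq
      have hsp1 := abs_le.1 hsp
      have hst1 := abs_le.1 hst
      have hnt0 := hsol.con_NT τ
      have hAM := amgm2 w₀ (Dl τ) (Np τ) hw₀0.le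
      set q : ℝ := qF γ κ Sp St Ap Np τ
      set x : ℝ := Dl τ
      set y : ℝ := Np τ
      set σ : ℝ := Sp τ
      set st : ℝ := St τ
      set n : ℝ := NT κ Ap Np τ
      clear_value q x y σ st n
      have hb1 : 2*Real.sqrt (12*w₀)*|x*y| ≤ 2*(st - n)*y^2 + 6*x^2 := by
        have l1 : w₀ ≤ st - n := by rw [hw₀def]; linarith
        nlinarith [sq_nonneg y]
      have hc3 : 3*q + 4*σ - 2 - a₂ ≤ 2*Real.sqrt (12*w₀) := by
        rw [ha₂def]
        have h5 : 3*q + 4*σ - 2 ≤ 4+4*s+7*δ := by linarith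
        linarith [hsqw, hδ1]
      have habs : x*y = -|x*y| := by rw [abs_of_neg hPneg]; ring
      have m1 : (3*q + 4*σ - 2 - a₂) * |x*y| ≤ 2*Real.sqrt (12*w₀) * |x*y| :=
        mul_le_mul_of_nonneg_right hc3 (abs_nonneg _)
      rw [habs]
      linarith [m1, hb1]
    have hmainP := monoExp dP keyP
    set c₀ : ℝ := -(Dl T₁ * Np T₁ * Real.exp (-(a₂*T₁))) with hc₀def
    have hPT₁ : Dl T₁ * Np T₁ < 0 := hsign T₁ (min_le_right _ _)
    have hc₀0 : 0 < c₀ := by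
      rw [hc₀def]
      have := Real.exp_pos (-(a₂*T₁))
      nlinarith
    have hPlow : ∀ τ ≤ T₁, c₀ * Real.exp (a₂*τ) ≤ |Dl τ| * |Np τ| := by
      intro τ hτ
      have h1 := hmainP τ hτ
      have hPneg : Dl τ * Np τ < 0 := hsign τ (le_trans hτ (min_le_right _ _))
      have h3 := mul_le_mul_of_nonneg_right h1 (Real.exp_pos (a₂*τ)).le
      rw [mul_assoc, ← Real.exp_add, neg_add_cancel, Real.exp_zero, mul_one] at h3
      have h4 : Dl T₁ * Np T₁ * Real.exp (-(a₂*T₁)) = -c₀ := by rw [hc₀def]; ring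
      rw [h4] at h3
      rw [← abs_mul, abs_of_neg hPneg]
      linarith
    obtain ⟨C₁, hC₁, T₂, hDlu⟩ := hDlO (ε/8) (by positivity)
    obtain ⟨C₂, hC₂, T₃, hNpu⟩ := hNpO (ε/8) (by positivity)
    set b : ℝ := 2+2*s-2*ρ-ε/8 with hbdef
    refine ⟨min (min T₁ (min T₂ T₃)) (min ((8/(5*ε))*Real.log (c₀/C₂)) ((8/(5*ε))*Real.log (c₀/C₁))),
      fun τ hτ => ?_⟩
    have hτ1 : τ ≤ T₁ := le_trans hτ (le_trans (min_le_left _ _) (min_le_left _ _))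
    have hτ2 : τ ≤ T₂ := le_trans hτ (le_trans (min_le_left _ _) (le_trans (min_le_right _ _) (min_le_left _ _)))
    have hτ3 : τ ≤ T₃ := le_trans hτ (le_trans (min_le_left _ _) (le_trans (min_le_right _ _) (min_le_right _ _)))
    have hτ4 : τ ≤ (8/(5*ε))*Real.log (c₀/C₂) := le_trans hτ (le_trans (min_le_right _ _) (min_le_left _ _))
    have hτ5 : τ ≤ (8/(5*ε))*Real.log (c₀/C₁) := le_trans hτ (le_trans (min_le_right _ _) (min_le_right _ _))
    have hlow := hPlow τ hτ1
    have expfact : ∀ (Cx : ℝ), 0 < Cx → τ ≤ (8/(5*ε))*Real.log (c₀/Cx) →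
        Cx * Real.exp ((b + (2+2*s-2*ρ+ε))*τ) ≤ c₀ * Real.exp (a₂*τ) := by
      intro Cx hCx hτ6
      have h5 : Real.exp ((5*ε/8)*τ) ≤ c₀/Cx := by
        rw [← Real.exp_log (show (0:ℝ) < c₀/Cx by positivity)]
        apply Real.exp_le_exp.2
        have h7 := mul_le_mul_of_nonneg_left hτ6 (show (0:ℝ) ≤ 5*ε/8 by positivity)
        calc (5*ε/8)*τ ≤ (5*ε/8)*((8/(5*ε))*Real.log (c₀/Cx)) := h7
          _ = Real.log (c₀/Cx) := by field_simp
      have h8 : (b + (2+2*s-2*ρ+ε))*τ = (5*ε/8)*τ + a₂*τ := by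
        rw [hbdef, ha₂def]; ring
      rw [h8, Real.exp_add]
      calc Cx * (Real.exp ((5*ε/8)*τ) * Real.exp (a₂*τ))
          ≤ Cx * ((c₀/Cx) * Real.exp (a₂*τ)) := by
            apply mul_le_mul_of_nonneg_left _ hCx.le
            exact mul_le_mul_of_nonneg_right h5 (Real.exp_pos _).le
        _ = c₀ * Real.exp (a₂*τ) := by field_simp
    constructor
    · -- lower bound for |Dl|
      have hup : |Np τ| ≤ C₂ * Real.exp (b*τ) := hNpu τ hτ3
      have p1 : |Dl τ| * |Np τ| ≤ |Dl τ| * (C₂*Real.exp (b*τ)) :=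
        mul_le_mul_of_nonneg_left hup (abs_nonneg _)
      have p2 : Real.exp ((2+2*s-2*ρ+ε)*τ) * (C₂*Real.exp (b*τ))
          ≤ |Dl τ| * (C₂*Real.exp (b*τ)) := by
        calc Real.exp ((2+2*s-2*ρ+ε)*τ) * (C₂*Real.exp (b*τ))
            = C₂ * Real.exp ((b + (2+2*s-2*ρ+ε))*τ) := by
              rw [show (b + (2+2*s-2*ρ+ε))*τ = b*τ + (2+2*s-2*ρ+ε)*τ by ring, Real.exp_add]; ring
          _ ≤ c₀ * Real.exp (a₂*τ) := expfact C₂ hC₂ hτ4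
          _ ≤ |Dl τ| * |Np τ| := hlow
          _ ≤ |Dl τ| * (C₂*Real.exp (b*τ)) := p1
      exact le_of_mul_le_mul_right p2 (by positivity)
    · have hup : |Dl τ| ≤ C₁ * Real.exp (b*τ) := hDlu τ hτ2
      have p1 : |Np τ| * |Dl τ| ≤ |Np τ| * (C₁*Real.exp (b*τ)) :=
        mul_le_mul_of_nonneg_left hup (abs_nonneg _)
      have p2 : Real.exp ((2+2*s-2*ρ+ε)*τ) * (C₁*Real.exp (b*τ))
          ≤ |Np τ| * (C₁*Real.exp (b*τ)) := by
        calc Real.exp ((2+2*s-2*ρ+ε)*τ) * (C₁*Real.exp (b*τ))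
            = C₁ * Real.exp ((b + (2+2*s-2*ρ+ε))*τ) := by
              rw [show (b + (2+2*s-2*ρ+ε))*τ = b*τ + (2+2*s-2*ρ+ε)*τ by ring, Real.exp_add]; ring
          _ ≤ c₀ * Real.exp (a₂*τ) := expfact C₁ hC₁ hτ5
          _ ≤ |Dl τ| * |Np τ| := hlow
          _ = |Np τ| * |Dl τ| := by ring
          _ ≤ |Np τ| * (C₁*Real.exp (b*τ)) := p1
      exact le_of_mul_le_mul_right p2 (by positivity)
end

section
/- Let 1/2 < s̄ ≤ 1 and 0 < ε < s̄ − 1/2. Then there exists a neighborhood U of (s̄, 1−s̄², 0, 0, 0) in ℝ⁵ such that for every solution Γ of the Bianchi class B system and every τ₀ ∈ ℝ with (Σ₊, Σ̃, Δ, Ã, N₊)(τ₀) ∈ U, one has |Σ₊(τ) − s̄| < ε for all τ ≤ τ₀. -/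
open Real Filter Topology MeasureTheory

lemma bianchi_consts (s₁ β S m c p : ℝ) (hs₁l : 1/2 < s₁)
    (hβ : β = 1 - s₁^2) (hβpos : 0 < β)
    (hS0 : 0 ≤ S) (hS2 : S^2 = 48*β)
    (hm : m = 4 + 4*s₁ - S) (hc : c = m/2) (hp : p = 3/β) :
    0 < m ∧ 0 < c ∧ 0 < p ∧ p*β = 3 := by
  have h1 : S^2 < (4+4*s₁)^2 := by
    rw [hS2, hβ]
    nlinarith [mul_pos (show (0:ℝ) < 2*s₁-1 by linarith) (show (0:ℝ) < s₁+1 by linarith)]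
  have hSlt : S < 4+4*s₁ := by nlinarith only [h1, hS0, hs₁l]
  refine ⟨by rw [hm]; linarith, by rw [hc, hm]; linarith, by rw [hp]; positivity, ?_⟩
  rw [hp]; field_simp

lemma bianchi_aux (γ κ s₁ β S m η p c K₁ K₂ σ t d x n nn q ω : ℝ)
    (hγ0 : 0 ≤ γ) (hγ2 : γ ≤ 2)
    (hs₁l : 1/2 < s₁)
    (hβ : β = 1 - s₁^2) (hβpos : 0 < β)
    (hS0 : 0 ≤ S) (hS2 : S^2 = 48*β)
    (hm : m = 4 + 4*s₁ - S)
    (hmpos : 0 < m) (hcpos : 0 < c) (hppos : 0 < p) (hpβ : p*β = 3)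
    (hηm : η ≤ m/56) (hη4 : η ≤ 1/4) (hηβ : η ≤ β)
    (hc : c = m/2)
    (hK₁ : K₁ = (6 + 8/3*|κ|)/c) (hK₂ : K₂ = (8/3)/c)
    (hnndef : nn = 1/3 * (n^2 - κ*x))
    (hq : q = 3/2*(2-γ)*(σ^2+t) + 1/2*(3*γ-2)*(1 - x - nn))
    (hω : ω = 1 - σ^2 - t - x - nn)
    (hcon : t*nn - d^2 - σ^2*x = 0)
    (ht : 0 ≤ t) (hx : 0 ≤ x) (hnn0 : 0 ≤ nn) (hω0 : 0 ≤ ω)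
    (hσl : s₁ ≤ σ)
    (hxη : x ≤ η) (hnnη : nn ≤ η) (hωη : ω ≤ η) :
    ((q - 2)*σ - 2*nn ≤ 0) ∧
    (0 ≤ 2*(q + 2*σ)*x) ∧
    (0 ≤ p*(2*d*(2*(q+σ-1)*d + 2*(t-nn)*n)) + 2*n*((q+2*σ)*n + 6*d)) ∧
    (0 ≤ ((q-2)*σ - 2*nn)
        + (-(2*σ*((q-2)*σ - 2*nn)) - (2*(q-2)*t - 4*σ*x - 4*d*n) - (2*(q+2*σ)*x)
            - 1/3*(2*n*((q+2*σ)*n + 6*d) - κ*(2*(q+2*σ)*x)))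
        + K₁*(2*(q+2*σ)*x)
        + K₂*(p*(2*d*(2*(q+σ-1)*d + 2*(t-nn)*n)) + 2*n*((q+2*σ)*n + 6*d))) ∧
    (0 ≤ (-(2*σ*((q-2)*σ - 2*nn)) - (2*(q-2)*t - 4*σ*x - 4*d*n) - (2*(q+2*σ)*x)
            - 1/3*(2*n*((q+2*σ)*n + 6*d) - κ*(2*(q+2*σ)*x)))
        + K₁*(2*(q+2*σ)*x)
        + K₂*(p*(2*d*(2*(q+σ-1)*d + 2*(t-nn)*n)) + 2*n*((q+2*σ)*n + 6*d))) := by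
  have hσpos : 0 < σ := by linarith only [hs₁l, hσl]
  have hσsq : σ^2 ≤ 1 := by linarith only [hω, hω0, ht, hx, hnn0]
  have hσ1 : σ ≤ 1 :=
    le_trans (le_abs_self σ)
      (abs_le_one_iff_mul_self_le_one.mpr (by nlinarith only [hσsq]))
  have hω1 : ω ≤ 1 := by linarith only [hω, sq_nonneg σ, ht, hx, hnn0]
  have h3nn : 3*nn = n^2 - κ*x := by rw [hnndef]; ring
  have hnnx : 3*nn ≤ n^2 + |κ| * x := by
    have h := mul_le_mul_of_nonneg_right (neg_le_abs κ) hx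
    linarith only [h, h3nn]
  have hq2 : q - 2 = -2*(x+nn) - 3/2*(2-γ)*ω := by rw [hq, hω]; ring
  have hqu : q ≤ 2 := by
    linarith only [hq2, hx, hnn0,
      mul_nonneg (show (0:ℝ) ≤ 2-γ by linarith only [hγ2]) hω0]
  have hql : 2 - 7*η ≤ q := by
    have h1 : (2-γ)*ω ≤ 2*ω :=
      mul_le_mul_of_nonneg_right (by linarith only [hγ0]) hω0
    linarith only [hq2, h1, hxη, hnnη, hωη]
  -- C1
  have hc1 : (q - 2)*σ - 2*nn ≤ 0 := by
    have h := mul_nonneg (show (0:ℝ) ≤ 2-q by linarith only [hqu]) hσpos.le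
    linarith only [h, hnn0]
  -- C2
  have hqσ : 0 < q + 2*σ := by linarith only [hql, hσl, hη4, hs₁l]
  have hc2 : 0 ≤ 2*(q+2*σ)*x := mul_nonneg (by linarith only [hqσ]) hx
  -- rates
  have hR1 : S + c ≤ 4*(q+σ-1) := by
    rw [hc]; linarith only [hql, hσl, hm, hηm, hmpos]
  have hR2 : S + c ≤ 2*(q+2*σ) := by
    rw [hc]; linarith only [hql, hσl, hm, hηm, hmpos]
  have hσs : s₁^2 ≤ σ^2 := by
    have h := pow_le_pow_left₀ (by linarith only [hs₁l] : (0:ℝ) ≤ s₁) hσl 2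
    linarith only [h]
  have htβ : t ≤ β := by rw [hβ]; linarith only [hω, hω0, hx, hnn0, hσs]
  have hcr1 : 0 ≤ 4*p*(t-nn) + 12 := by
    have h2 : p*(-β) ≤ p*(t-nn) :=
      mul_le_mul_of_nonneg_left (by linarith only [ht, hnnη, hηβ]) hppos.le
    linarith only [h2, hpβ]
  have hcr2 : 4*p*(t-nn) + 12 ≤ 24 := by
    have h1 : p*(t-nn) ≤ p*β :=
      mul_le_mul_of_nonneg_left (by linarith only [htβ, hnn0]) hppos.le
    linarith only [h1, hpβ]
  -- AM-GM cross bound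
  have hSppos : 0 ≤ S*p := mul_nonneg hS0 hppos.le
  have hsq1 : Real.sqrt (S*p)^2 = S*p := Real.sq_sqrt hSppos
  have hsq2 : Real.sqrt S^2 = S := Real.sq_sqrt hS0
  have h144 : S*p*S = 144 := by
    calc S*p*S = S^2*p := by ring
    _ = 48*β*p := by rw [hS2]
    _ = 48*(p*β) := by ring
    _ = 144 := by rw [hpβ]; norm_num
  have h12 : Real.sqrt (S*p) * Real.sqrt S = 12 := by
    rw [← Real.sqrt_mul hSppos]
    rw [show S*p*S = (144:ℝ) from h144]
    rw [show (144:ℝ) = 12^2 by norm_num]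
    exact Real.sqrt_sq (by norm_num)
  have hAM : 24*(|d| * |n|) ≤ S*p*d^2 + S*n^2 := by
    have hkey := sq_nonneg (Real.sqrt (S*p) * |d| - Real.sqrt S * |n|)
    have hexp : (Real.sqrt (S*p) * |d| - Real.sqrt S * |n|)^2
        = (Real.sqrt (S*p))^2 * |d|^2 + (Real.sqrt S)^2 * |n|^2
          - 2*((Real.sqrt (S*p))*(Real.sqrt S))*(|d| * |n|) := by ring
    rw [hsq1, hsq2, h12, sq_abs, sq_abs] at hexp
    linarith only [hkey, hexp.le, hexp.ge]
  -- eG lower bound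
  have hdn1 : -(|d| * |n|) ≤ d*n := by rw [← abs_mul]; exact neg_abs_le _
  have habs : 0 ≤ d*n + |d| * |n| := by linarith only [hdn1]
  have e1 : (S+c)*(p*d^2) ≤ 4*(q+σ-1)*(p*d^2) :=
    mul_le_mul_of_nonneg_right hR1 (mul_nonneg hppos.le (sq_nonneg d))
  have e2 : (S+c)*n^2 ≤ 2*(q+2*σ)*n^2 := mul_le_mul_of_nonneg_right hR2 (sq_nonneg n)
  have e3 : -(24*(|d| * |n|)) ≤ (4*p*(t-nn)+12)*(d*n) := by
    have A := mul_nonneg hcr1 habs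
    have B := mul_le_mul_of_nonneg_right hcr2 (mul_nonneg (abs_nonneg d) (abs_nonneg n))
    nlinarith only [A, B]
  have hEGeq : p*(2*d*(2*(q+σ-1)*d + 2*(t-nn)*n)) + 2*n*((q+2*σ)*n + 6*d)
      = 4*(q+σ-1)*(p*d^2) + 2*(q+2*σ)*n^2 + (4*p*(t-nn)+12)*(d*n) := by ring
  have hGc : c*(p*d^2 + n^2)
      ≤ p*(2*d*(2*(q+σ-1)*d + 2*(t-nn)*n)) + 2*n*((q+2*σ)*n + 6*d) := by
    rw [hEGeq]; linarith only [e1, e2, e3, hAM]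
  have hpdn : 0 ≤ p*d^2 + n^2 :=
    add_nonneg (mul_nonneg hppos.le (sq_nonneg d)) (sq_nonneg n)
  have hc3 : 0 ≤ p*(2*d*(2*(q+σ-1)*d + 2*(t-nn)*n)) + 2*n*((q+2*σ)*n + 6*d) :=
    le_trans (mul_nonneg hcpos.le hpdn) hGc
  -- constants
  have hcne : c ≠ 0 := ne_of_gt hcpos
  have hK₁c : K₁*c = 6 + 8/3*|κ| := by rw [hK₁]; field_simp
  have hK₂c : K₂*c = 8/3 := by rw [hK₂]; field_simp
  have hK₁0 : 0 ≤ K₁ := by rw [hK₁]; exact div_nonneg (by positivity) hcpos.le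
  have hK₂0 : 0 ≤ K₂ := by rw [hK₂]; exact div_nonneg (by norm_num) hcpos.le
  have hEAl : c*x ≤ 2*(q+2*σ)*x :=
    mul_le_mul_of_nonneg_right (by linarith only [hR2, hS0]) hx
  have hKEA : (6+8/3*|κ|)*x ≤ K₁*(2*(q+2*σ)*x) := by
    calc (6+8/3*|κ|)*x = K₁*(c*x) := by
          rw [show K₁*(c*x) = K₁*c*x by ring, hK₁c]
    _ ≤ K₁*(2*(q+2*σ)*x) := mul_le_mul_of_nonneg_left hEAl hK₁0
  have hKEG : 8/3*(p*d^2+n^2)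
      ≤ K₂*(p*(2*d*(2*(q+σ-1)*d + 2*(t-nn)*n)) + 2*n*((q+2*σ)*n + 6*d)) := by
    calc 8/3*(p*d^2+n^2) = K₂*(c*(p*d^2+n^2)) := by
          rw [show K₂*(c*(p*d^2+n^2)) = K₂*c*(p*d^2+n^2) by ring, hK₂c]
    _ ≤ _ := mul_le_mul_of_nonneg_left hGc hK₂0
  -- products for the drift estimate
  have hxnn0 : 0 ≤ x + nn := add_nonneg hx hnn0
  have hA1 : (x+nn)*σ ≤ x+nn := by
    have h := mul_le_mul_of_nonneg_left hσ1 hxnn0; linarith only [h]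
  have hA2 : (x+nn)*ω ≤ x+nn := by
    have h := mul_le_mul_of_nonneg_left hω1 hxnn0; linarith only [h]
  have hA3 : 0 ≤ (2-γ)*(ω*(2-σ-2*ω)) :=
    mul_nonneg (by linarith only [hγ2])
      (mul_nonneg hω0 (by linarith only [hσ1, hωη, hη4]))
  have hA4 : 0 ≤ (2-γ)*(ω*(1-ω)) :=
    mul_nonneg (by linarith only [hγ2]) (mul_nonneg hω0 (by linarith only [hω1]))
  have hidE : ((q-2)*σ - 2*nn)
        + (-(2*σ*((q-2)*σ - 2*nn)) - (2*(q-2)*t - 4*σ*x - 4*d*n) - (2*(q+2*σ)*x)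
            - 1/3*(2*n*((q+2*σ)*n + 6*d) - κ*(2*(q+2*σ)*x)))
      = -2*((x+nn)*σ) - 4*((x+nn)*ω) - 2*nn + 3/2*((2-γ)*(ω*(2-σ-2*ω))) := by
    rw [hq, hω]; rw [hnndef]; ring
  have hidE2 : (-(2*σ*((q-2)*σ - 2*nn)) - (2*(q-2)*t - 4*σ*x - 4*d*n) - (2*(q+2*σ)*x)
            - 1/3*(2*n*((q+2*σ)*n + 6*d) - κ*(2*(q+2*σ)*x)))
      = -4*((x+nn)*ω) + 3*((2-γ)*(ω*(1-ω))) := by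
    rw [hq, hω]; rw [hnndef]; ring
  have hκx0 : 0 ≤ |κ| * x := mul_nonneg (abs_nonneg κ) hx
  have hpd2 : 0 ≤ p*d^2 := mul_nonneg hppos.le (sq_nonneg d)
  refine ⟨hc1, hc2, hc3, ?_, ?_⟩
  · linarith only [hidE, hKEA, hKEG, hA1, hA2, hA3, hnnx, hκx0, hpd2, hx, sq_nonneg n]
  · linarith only [hidE2, hKEA, hKEG, hA2, hA4, hnnx, hκx0, hpd2, hx, sq_nonneg n]

lemma mono_help {f : ℝ → ℝ} {a b : ℝ} (hab : a ≤ b) (hdf : Differentiable ℝ f)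
    (h : ∀ τ ∈ Set.Icc a b, ∃ v, HasDerivAt f v τ ∧ 0 ≤ v) : f a ≤ f b := by
  have hm := monotoneOn_of_deriv_nonneg (convex_Icc a b) hdf.continuous.continuousOn
    (fun τ _ => (hdf τ).differentiableWithinAt)
    (fun τ hτ => by
      obtain ⟨v, hv, hv0⟩ := h τ (interior_subset hτ)
      rw [hv.deriv]; exact hv0)
  exact hm (Set.left_mem_Icc.mpr hab) (Set.right_mem_Icc.mpr hab) hab

lemma anti_help {f : ℝ → ℝ} {a b : ℝ} (hab : a ≤ b) (hdf : Differentiable ℝ f)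
    (h : ∀ τ ∈ Set.Icc a b, ∃ v, HasDerivAt f v τ ∧ v ≤ 0) : f b ≤ f a := by
  have := mono_help (f := fun x => -f x) hab hdf.neg (fun τ hτ => by
    obtain ⟨v, hv, hv0⟩ := h τ hτ
    exact ⟨-v, hv.neg, by linarith⟩)
  simpa using this

lemma le_lim_right {f : ℝ → ℝ} {a b c : ℝ} (hab : a < b) (hf : Continuous f)
    (h : ∀ σ ∈ Set.Ioc a b, f σ ≤ c) : f a ≤ c := by
  have ht : Tendsto f (𝓝[>] a) (𝓝 (f a)) := (hf.tendsto a).mono_left nhdsWithin_le_nhds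
  refine le_of_tendsto ht ?_
  filter_upwards [Ioc_mem_nhdsGT_of_mem (Set.mem_Ico.mpr ⟨le_refl a, hab⟩)] with σ hσ
  exact h σ hσ

lemma ge_lim_right {f : ℝ → ℝ} {a b c : ℝ} (hab : a < b) (hf : Continuous f)
    (h : ∀ σ ∈ Set.Ioc a b, c ≤ f σ) : c ≤ f a := by
  have := le_lim_right (f := fun x => -f x) (c := -c) hab hf.neg
    (fun σ hσ => by simpa using h σ hσ)
  simpa using this

set_option maxHeartbeats 1000000 in
theorem stmt18 (γ κ sb ε : ℝ)
    (hγ : γ ∈ Set.Icc (0:ℝ) 2)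
    (hsb : 1/2 < sb ∧ sb ≤ 1) (hε : 0 < ε ∧ ε < sb - 1/2) :
    ∃ U ∈ 𝓝 ((sb, 1 - sb^2, 0, 0, 0) : ℝ × ℝ × ℝ × ℝ × ℝ),
      ∀ Sp St Dl Ap Np : ℝ → ℝ, BianchiB γ κ Sp St Dl Ap Np →
        ∀ τ₀ : ℝ, traj Sp St Dl Ap Np τ₀ ∈ U →
          ∀ τ ≤ τ₀, |Sp τ - sb| < ε := by
  obtain ⟨hsbl, hsbu⟩ := hsb
  obtain ⟨hε0, hεu⟩ := hε
  -- constants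
  obtain ⟨s₁, hs₁def⟩ : ∃ x : ℝ, x = sb - ε/2 := ⟨_, rfl⟩
  obtain ⟨β, hβdef⟩ : ∃ x : ℝ, x = 1 - s₁^2 := ⟨_, rfl⟩
  obtain ⟨S, hSdef⟩ : ∃ x : ℝ, x = Real.sqrt (48*β) := ⟨_, rfl⟩
  obtain ⟨m, hmdef⟩ : ∃ x : ℝ, x = 4 + 4*s₁ - S := ⟨_, rfl⟩
  obtain ⟨η, hηdef⟩ : ∃ x : ℝ, x = min (min (m/56) (1/4)) β := ⟨_, rfl⟩
  obtain ⟨p, hpdef⟩ : ∃ x : ℝ, x = 3/β := ⟨_, rfl⟩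
  obtain ⟨c, hcdef⟩ : ∃ x : ℝ, x = m/2 := ⟨_, rfl⟩
  obtain ⟨K₁, hK₁def⟩ : ∃ x : ℝ, x = (6 + 8/3*|κ|)/c := ⟨_, rfl⟩
  obtain ⟨K₂, hK₂def⟩ : ∃ x : ℝ, x = (8/3)/c := ⟨_, rfl⟩
  have hs₁l : 1/2 < s₁ := by rw [hs₁def]; linarith
  have hs₁u : s₁ < 1 := by rw [hs₁def]; linarith
  have hβpos : 0 < β := by
    rw [hβdef]
    nlinarith only [mul_pos (show (0:ℝ) < 1 - s₁ by linarith) (show (0:ℝ) < 1 + s₁ by linarith)]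
  have hS0 : 0 ≤ S := by rw [hSdef]; positivity
  have hS2 : S^2 = 48*β := by rw [hSdef]; exact Real.sq_sqrt (by positivity)
  obtain ⟨hmpos, hcpos, hppos, hpβ⟩ :=
    bianchi_consts s₁ β S m c p hs₁l hβdef hβpos hS0 hS2 hmdef hcdef hpdef
  have hηm : η ≤ m/56 := by rw [hηdef]; exact le_trans (min_le_left _ _) (min_le_left _ _)
  have hη4 : η ≤ 1/4 := by rw [hηdef]; exact le_trans (min_le_left _ _) (min_le_right _ _)
  have hηβ : η ≤ β := by rw [hηdef]; exact min_le_right _ _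
  have hηpos : 0 < η := by
    rw [hηdef]; exact lt_min (lt_min (by linarith) (by norm_num)) hβpos
  have hK₁0 : 0 < K₁ := by rw [hK₁def]; exact div_pos (by positivity) hcpos
  have hK₂0 : 0 < K₂ := by rw [hK₂def]; exact div_pos (by norm_num) hcpos
  obtain ⟨δ, hδdef⟩ : ∃ x : ℝ, x = min (ε/2) η / ((6+K₁+K₂)*(1+|κ|)) := ⟨_, rfl⟩
  have hden : 0 < (6+K₁+K₂)*(1+|κ|) := mul_pos (by linarith) (by positivity)
  have hδpos : 0 < δ := by
    rw [hδdef]; exact div_pos (lt_min (by linarith) hηpos) hden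
  have hδkey : δ * ((6+K₁+K₂)*(1+|κ|)) = min (ε/2) η := by
    rw [hδdef]; field_simp
  have h5δ : (5+K₁+K₂)*δ < min (ε/2) η := by
    have h1 : (5+K₁+K₂) + 1 ≤ (6+K₁+K₂)*(1+|κ|) := by
      nlinarith only [mul_nonneg (show (0:ℝ) ≤ 6+K₁+K₂ by linarith) (abs_nonneg κ)]
    have h2 := mul_le_mul_of_nonneg_right h1 hδpos.le
    nlinarith only [h2, hδkey, hδpos]
  have hδm : 5*δ < min (ε/2) η := by
    nlinarith only [h5δ, mul_nonneg (by linarith : (0:ℝ) ≤ K₁+K₂) hδpos.le]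
  have hminε : min (ε/2) η ≤ ε/2 := min_le_left _ _
  have hminη : min (ε/2) η ≤ η := min_le_right _ _
  have hδε : δ < ε/2 := by linarith
  have hδη : δ < η := by linarith
  have h4δη : 4*δ < η := by linarith
  have h5δη : (5+K₁+K₂)*δ < η := lt_of_lt_of_le h5δ hminη
  have h5δε : (5+K₁+K₂)*δ < ε/2 := lt_of_lt_of_le h5δ hminε
  have hδ20 : δ < 1/20 := by linarith
  have hκδ : (1+|κ|)*δ < η := by
    have h6 : 6*((1+|κ|)*δ) ≤ min (ε/2) η := by
      nlinarith only [hδkey, hδpos,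
        mul_nonneg (mul_nonneg (show (0:ℝ) ≤ K₁+K₂ by linarith) (by positivity : (0:ℝ) ≤ 1+|κ|)) hδpos.le]
    nlinarith only [h6, hminη, hηpos, mul_nonneg (abs_nonneg κ) hδpos.le, hδpos]
  obtain ⟨δ₂, hδ₂def⟩ : ∃ x : ℝ, x = Real.sqrt (δ/(p+1)) := ⟨_, rfl⟩
  have hδfrac : 0 < δ/(p+1) := div_pos hδpos (by linarith)
  have hδ₂pos : 0 < δ₂ := by rw [hδ₂def]; exact Real.sqrt_pos.mpr hδfrac
  have hδ₂sq : δ₂^2 = δ/(p+1) := by rw [hδ₂def]; exact Real.sq_sqrt hδfrac.le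
  have hδ₂δ : (p+1)*δ₂^2 = δ := by
    rw [hδ₂sq]; field_simp
  have hδ₂leδ : δ₂^2 ≤ δ := by
    nlinarith only [hδ₂δ, mul_nonneg hppos.le (sq_nonneg δ₂)]
  refine ⟨Metric.ball sb δ ×ˢ (Metric.ball (1 - sb^2) δ ×ˢ (Metric.ball 0 δ₂ ×ˢ
    (Metric.ball 0 δ ×ˢ Metric.ball 0 δ₂))), ?_, ?_⟩
  · exact prod_mem_nhds (Metric.ball_mem_nhds _ hδpos) (prod_mem_nhds
      (Metric.ball_mem_nhds _ hδpos) (prod_mem_nhds (Metric.ball_mem_nhds _ hδ₂pos)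
      (prod_mem_nhds (Metric.ball_mem_nhds _ hδpos) (Metric.ball_mem_nhds _ hδ₂pos))))
  intro Sp St Dl Ap Np sol τ₀ hU τ hτ
  simp only [traj, Set.mem_prod, Metric.mem_ball] at hU
  obtain ⟨hU1, hU2, hU3, hU4, hU5⟩ := hU
  rw [Real.dist_eq] at hU1 hU2 hU3 hU4 hU5
  rw [sub_zero] at hU3 hU4 hU5
  obtain ⟨hσ₀l, hσ₀u⟩ := abs_lt.mp hU1
  obtain ⟨ht₀l, ht₀u⟩ := abs_lt.mp hU2
  obtain ⟨hd₀l, hd₀u⟩ := abs_lt.mp hU3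
  obtain ⟨hn₀l, hn₀u⟩ := abs_lt.mp hU5
  have hσ₀l' : sb - δ < Sp τ₀ := by linarith
  have hσ₀u' : Sp τ₀ < sb + δ := by linarith
  have hx₀ : Ap τ₀ < δ := lt_of_le_of_lt (le_abs_self _) hU4
  have hx₀l : 0 ≤ Ap τ₀ := sol.con_Ap τ₀
  have hd₀ : (Dl τ₀)^2 < δ₂^2 := by
    nlinarith only [mul_pos (show (0:ℝ) < δ₂ - Dl τ₀ by linarith)
      (show (0:ℝ) < δ₂ + Dl τ₀ by linarith)]
  have hn₀ : (Np τ₀)^2 < δ₂^2 := by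
    nlinarith only [mul_pos (show (0:ℝ) < δ₂ - Np τ₀ by linarith)
      (show (0:ℝ) < δ₂ + Np τ₀ by linarith)]
  have hG₀ : p*(Dl τ₀)^2 + (Np τ₀)^2 < δ := by
    have h := mul_lt_mul_of_pos_left hd₀ hppos
    linarith [hδ₂δ, hn₀]
  have hn₀δ : (Np τ₀)^2 < δ := by linarith
  -- derivative facts
  have hdSp : ∀ u, HasDerivAt Sp
      ((qF γ κ Sp St Ap Np u - 2) * Sp u - 2 * NT κ Ap Np u) u := fun u => by
    rw [← sol.ev_Sp u]; exact (sol.diff_Sp u).hasDerivAt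
  have hdSt : ∀ u, HasDerivAt St
      (2*(qF γ κ Sp St Ap Np u - 2) * St u - 4 * Sp u * Ap u - 4 * Dl u * Np u) u := fun u => by
    rw [← sol.ev_St u]; exact (sol.diff_St u).hasDerivAt
  have hdDl : ∀ u, HasDerivAt Dl
      (2*(qF γ κ Sp St Ap Np u + Sp u - 1) * Dl u + 2*(St u - NT κ Ap Np u) * Np u) u := fun u => by
    rw [← sol.ev_Dl u]; exact (sol.diff_Dl u).hasDerivAt
  have hdAp : ∀ u, HasDerivAt Ap
      (2*(qF γ κ Sp St Ap Np u + 2*Sp u) * Ap u) u := fun u => by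
    rw [← sol.ev_Ap u]; exact (sol.diff_Ap u).hasDerivAt
  have hdNp : ∀ u, HasDerivAt Np
      ((qF γ κ Sp St Ap Np u + 2*Sp u) * Np u + 6 * Dl u) u := fun u => by
    rw [← sol.ev_Np u]; exact (sol.diff_Np u).hasDerivAt
  have homnn : ∀ u, 0 ≤ OmF κ Sp St Ap Np u := fun u => by
    have h := sol.con_sum u
    simp only [OmF]; linarith
  have homEq : ∀ u, OmF κ Sp St Ap Np u
      = 1 - (Sp u)^2 - St u - Ap u - 1/3*((Np u)^2 - κ*Ap u) := fun u => rfl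
  have hNTeq : ∀ u, NT κ Ap Np u = 1/3*((Np u)^2 - κ*Ap u) := fun u => rfl
  have haux := fun (u : ℝ) (hb1 : s₁ ≤ Sp u) (hb3 : Ap u ≤ η)
      (hb4 : NT κ Ap Np u ≤ η) (hb5 : OmF κ Sp St Ap Np u ≤ η) =>
    bianchi_aux γ κ s₁ β S m η p c K₁ K₂ (Sp u) (St u) (Dl u) (Ap u) (Np u)
      (NT κ Ap Np u) (qF γ κ Sp St Ap Np u) (OmF κ Sp St Ap Np u)
      hγ.1 hγ.2 hs₁l hβdef hβpos hS0 hS2 hmdef hmpos hcpos hppos hpβ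
      hηm hη4 hηβ hcdef hK₁def hK₂def rfl rfl rfl (sol.con_main u)
      (sol.con_St u) (sol.con_Ap u) (sol.con_NT u) (homnn u) hb1 hb3 hb4 hb5
  have hdiffOm : Differentiable ℝ
      (fun x => 1 - (Sp x)^2 - St x - Ap x - 1/3*((Np x)^2 - κ*Ap x)) :=
    ((((differentiable_const 1).sub (sol.diff_Sp.pow 2)).sub sol.diff_St).sub
      sol.diff_Ap).sub (((sol.diff_Np.pow 2).sub (sol.diff_Ap.const_mul κ)).const_mul (1/3))
  have hdiffG : Differentiable ℝ (fun x => p*(Dl x)^2 + (Np x)^2) :=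
    ((sol.diff_Dl.pow 2).const_mul p).add (sol.diff_Np.pow 2)
  have hdiffW : Differentiable ℝ (fun x => Sp x
      + (1 - (Sp x)^2 - St x - Ap x - 1/3*((Np x)^2 - κ*Ap x))
      + K₁*Ap x + K₂*(p*(Dl x)^2 + (Np x)^2)) :=
    ((sol.diff_Sp.add hdiffOm).add (sol.diff_Ap.const_mul K₁)).add (hdiffG.const_mul K₂)
  have hdiffV : Differentiable ℝ (fun x =>
      (1 - (Sp x)^2 - St x - Ap x - 1/3*((Np x)^2 - κ*Ap x))
      + K₁*Ap x + K₂*(p*(Dl x)^2 + (Np x)^2)) :=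
    (hdiffOm.add (sol.diff_Ap.const_mul K₁)).add (hdiffG.const_mul K₂)
  -- initial smallness of NT and OmF
  have hNT₀η : NT κ Ap Np τ₀ < η := by
    have h8 := mul_le_mul_of_nonneg_right (neg_le_abs κ) hx₀l
    have h9 : |κ| * Ap τ₀ ≤ |κ| * δ := mul_le_mul_of_nonneg_left hx₀.le (abs_nonneg κ)
    rw [hNTeq τ₀]; linarith [hn₀δ, hκδ, hηpos]
  have hω₀ : OmF κ Sp St Ap Np τ₀ < 4*δ := by
    have h1 := sol.con_Ap τ₀
    have h2 := sol.con_NT τ₀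
    have hsbδ : 0 < sb - δ := by linarith
    have hsp : (sb-δ)^2 < (Sp τ₀)^2 := by nlinarith only [hσ₀l', hsbδ]
    have hsd : sb*δ ≤ δ := by nlinarith only [hsbu, hδpos]
    rw [homEq τ₀, ← hNTeq τ₀]
    nlinarith only [hsp, ht₀l, h1, h2, hsd, sq_nonneg δ, hδpos]
  have hBP₀ : s₁ ≤ Sp τ₀ ∧ Sp τ₀ ≤ sb + ε/2 ∧ Ap τ₀ ≤ η ∧
      NT κ Ap Np τ₀ ≤ η ∧ OmF κ Sp St Ap Np τ₀ ≤ η :=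
    ⟨by rw [hs₁def]; linarith, by linarith, by linarith, hNT₀η.le, by linarith⟩
  -- the key a-priori estimate
  have key : ∀ a, a ≤ τ₀ →
      (∀ u ∈ Set.Icc a τ₀, s₁ ≤ Sp u ∧ Sp u ≤ sb + ε/2 ∧ Ap u ≤ η ∧
        NT κ Ap Np u ≤ η ∧ OmF κ Sp St Ap Np u ≤ η) →
      sb - δ < Sp a ∧ Sp a < sb + (5+K₁+K₂)*δ ∧ Ap a < δ ∧
        NT κ Ap Np a < η ∧ OmF κ Sp St Ap Np a < η := by
    intro a ha hP
    have hSpanti : Sp τ₀ ≤ Sp a := by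
      refine anti_help ha sol.diff_Sp (fun u hu => ?_)
      obtain ⟨hb1, hb2, hb3, hb4, hb5⟩ := hP u hu
      exact ⟨_, hdSp u, (haux u hb1 hb3 hb4 hb5).1⟩
    have hApmono : Ap a ≤ Ap τ₀ := by
      refine mono_help ha sol.diff_Ap (fun u hu => ?_)
      obtain ⟨hb1, hb2, hb3, hb4, hb5⟩ := hP u hu
      exact ⟨_, hdAp u, (haux u hb1 hb3 hb4 hb5).2.1⟩
    have hGmono : p*(Dl a)^2 + (Np a)^2 ≤ p*(Dl τ₀)^2 + (Np τ₀)^2 := by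
      refine mono_help ha hdiffG (fun u hu => ?_)
      obtain ⟨hb1, hb2, hb3, hb4, hb5⟩ := hP u hu
      refine ⟨_, (((hdDl u).pow 2).const_mul p).add ((hdNp u).pow 2), ?_⟩
      refine le_of_le_of_eq (haux u hb1 hb3 hb4 hb5).2.2.1 ?_
      push_cast; ring
    have hWmono : Sp a + (1 - (Sp a)^2 - St a - Ap a - 1/3*((Np a)^2 - κ*Ap a))
        + K₁*Ap a + K₂*(p*(Dl a)^2 + (Np a)^2)
        ≤ Sp τ₀ + (1 - (Sp τ₀)^2 - St τ₀ - Ap τ₀ - 1/3*((Np τ₀)^2 - κ*Ap τ₀))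
        + K₁*Ap τ₀ + K₂*(p*(Dl τ₀)^2 + (Np τ₀)^2) := by
      refine mono_help ha hdiffW (fun u hu => ?_)
      obtain ⟨hb1, hb2, hb3, hb4, hb5⟩ := hP u hu
      refine ⟨_, (((hdSp u).add (((((hasDerivAt_const u (1:ℝ)).sub
        ((hdSp u).pow 2)).sub (hdSt u)).sub (hdAp u)).sub ((((hdNp u).pow 2).sub
        ((hdAp u).const_mul κ)).const_mul (1/3)))).add ((hdAp u).const_mul K₁)).add
        (((((hdDl u).pow 2).const_mul p).add ((hdNp u).pow 2)).const_mul K₂), ?_⟩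
      refine le_of_le_of_eq (haux u hb1 hb3 hb4 hb5).2.2.2.1 ?_
      push_cast; ring
    have hVmono : (1 - (Sp a)^2 - St a - Ap a - 1/3*((Np a)^2 - κ*Ap a))
        + K₁*Ap a + K₂*(p*(Dl a)^2 + (Np a)^2)
        ≤ (1 - (Sp τ₀)^2 - St τ₀ - Ap τ₀ - 1/3*((Np τ₀)^2 - κ*Ap τ₀))
        + K₁*Ap τ₀ + K₂*(p*(Dl τ₀)^2 + (Np τ₀)^2) := by
      refine mono_help ha hdiffV (fun u hu => ?_)
      obtain ⟨hb1, hb2, hb3, hb4, hb5⟩ := hP u hu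
      refine ⟨_, ((((((hasDerivAt_const u (1:ℝ)).sub
        ((hdSp u).pow 2)).sub (hdSt u)).sub (hdAp u)).sub ((((hdNp u).pow 2).sub
        ((hdAp u).const_mul κ)).const_mul (1/3))).add ((hdAp u).const_mul K₁)).add
        (((((hdDl u).pow 2).const_mul p).add ((hdNp u).pow 2)).const_mul K₂), ?_⟩
      refine le_of_le_of_eq (haux u hb1 hb3 hb4 hb5).2.2.2.2 ?_
      push_cast; ring
    have hGa0 : 0 ≤ p*(Dl a)^2 + (Np a)^2 :=
      add_nonneg (mul_nonneg hppos.le (sq_nonneg _)) (sq_nonneg _)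
    have hKA0 : 0 ≤ K₁*Ap a := mul_nonneg hK₁0.le (sol.con_Ap a)
    have hKG0 : 0 ≤ K₂*(p*(Dl a)^2 + (Np a)^2) := mul_nonneg hK₂0.le hGa0
    have hKAτ : K₁*Ap τ₀ ≤ K₁*δ := mul_le_mul_of_nonneg_left hx₀.le hK₁0.le
    have hKGτ : K₂*(p*(Dl τ₀)^2 + (Np τ₀)^2) ≤ K₂*δ :=
      mul_le_mul_of_nonneg_left hG₀.le hK₂0.le
    refine ⟨by linarith, ?_, by linarith, ?_, ?_⟩
    · linarith [hWmono, homEq a, homEq τ₀, homnn a, hω₀, hKA0, hKG0, hKAτ, hKGτ]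
    · have h7 : (Np a)^2 ≤ p*(Dl a)^2 + (Np a)^2 :=
        le_add_of_nonneg_left (mul_nonneg hppos.le (sq_nonneg _))
      have h8 := mul_le_mul_of_nonneg_right (neg_le_abs κ) (sol.con_Ap a)
      have h9 : |κ| * Ap a ≤ |κ| * δ :=
        mul_le_mul_of_nonneg_left (by linarith) (abs_nonneg κ)
      rw [hNTeq a]
      linarith [h7, hGmono, hG₀, h8, h9, hκδ, hηpos]
    · have h10 : (4+K₁+K₂)*δ < η := by nlinarith only [h5δη, hδpos]
      linarith [hVmono, homEq a, homEq τ₀, hω₀, hKA0, hKG0, hKAτ, hKGτ, h10]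
  -- continuity facts
  have hCSp : Continuous Sp := sol.diff_Sp.continuous
  have hCAp : Continuous Ap := sol.diff_Ap.continuous
  have hCNT : Continuous (fun u => NT κ Ap Np u) :=
    continuous_const.mul ((sol.diff_Np.continuous.pow 2).sub
      (continuous_const.mul sol.diff_Ap.continuous))
  have hCOm : Continuous (fun u => OmF κ Sp St Ap Np u) :=
    (((continuous_const.sub (sol.diff_Sp.continuous.pow 2)).sub
      sol.diff_St.continuous).sub sol.diff_Ap.continuous).sub hCNT
  -- the bootstrap argument
  have hall : ∀ u, u ≤ τ₀ → (s₁ ≤ Sp u ∧ Sp u ≤ sb + ε/2 ∧ Ap u ≤ η ∧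
      NT κ Ap Np u ≤ η ∧ OmF κ Sp St Ap Np u ≤ η) := by
    by_contra hcon
    push_neg at hcon
    obtain ⟨τ₁, hτ₁le, hτ₁bad⟩ := hcon
    set Sbad : Set ℝ := {u | u ≤ τ₀ ∧ ¬ (s₁ ≤ Sp u ∧ Sp u ≤ sb + ε/2 ∧ Ap u ≤ η ∧
      NT κ Ap Np u ≤ η ∧ OmF κ Sp St Ap Np u ≤ η)} with hSbaddef
    have hne : Sbad.Nonempty := ⟨τ₁, hτ₁le, fun h =>
      absurd h.2.2.2.2 (not_le.mpr (hτ₁bad h.1 h.2.1 h.2.2.1 h.2.2.2.1))⟩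
    have hbdd : BddAbove Sbad := ⟨τ₀, fun z hz => hz.1⟩
    set τs := sSup Sbad with hτsdef
    have hτsle : τs ≤ τ₀ := csSup_le hne (fun z hz => hz.1)
    have hIoc : ∀ u ∈ Set.Ioc τs τ₀, (s₁ ≤ Sp u ∧ Sp u ≤ sb + ε/2 ∧ Ap u ≤ η ∧
        NT κ Ap Np u ≤ η ∧ OmF κ Sp St Ap Np u ≤ η) := by
      intro u hu
      by_contra hbu
      exact absurd (le_csSup hbdd ⟨hu.2, hbu⟩) (not_le.mpr hu.1)
    have hBPτs : s₁ ≤ Sp τs ∧ Sp τs ≤ sb + ε/2 ∧ Ap τs ≤ η ∧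
        NT κ Ap Np τs ≤ η ∧ OmF κ Sp St Ap Np τs ≤ η := by
      rcases eq_or_lt_of_le hτsle with heq | hlt
      · rw [heq]; exact hBP₀
      · exact ⟨ge_lim_right hlt hCSp (fun u hu => (hIoc u hu).1),
          le_lim_right hlt hCSp (fun u hu => (hIoc u hu).2.1),
          le_lim_right hlt hCAp (fun u hu => (hIoc u hu).2.2.1),
          le_lim_right hlt hCNT (fun u hu => (hIoc u hu).2.2.2.1),
          le_lim_right hlt hCOm (fun u hu => (hIoc u hu).2.2.2.2)⟩
    have hIcc : ∀ u ∈ Set.Icc τs τ₀, (s₁ ≤ Sp u ∧ Sp u ≤ sb + ε/2 ∧ Ap u ≤ η ∧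
        NT κ Ap Np u ≤ η ∧ OmF κ Sp St Ap Np u ≤ η) := by
      intro u hu
      rcases eq_or_lt_of_le hu.1 with he | hl
      · rw [← he]; exact hBPτs
      · exact hIoc u ⟨hl, hu.2⟩
    obtain ⟨hk1, hk2, hk3, hk4, hk5⟩ := key τs hτsle hIcc
    have hev : ∀ᶠ u in 𝓝 τs, (s₁ < Sp u ∧ Sp u < sb + ε/2 ∧ Ap u < η ∧
        NT κ Ap Np u < η ∧ OmF κ Sp St Ap Np u < η) := by
      have e1 : ∀ᶠ u in 𝓝 τs, s₁ < Sp u :=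
        hCSp.continuousAt.preimage_mem_nhds (Ioi_mem_nhds (by rw [hs₁def]; linarith))
      have e2 : ∀ᶠ u in 𝓝 τs, Sp u < sb + ε/2 :=
        hCSp.continuousAt.preimage_mem_nhds (Iio_mem_nhds (by linarith))
      have e3 : ∀ᶠ u in 𝓝 τs, Ap u < η :=
        hCAp.continuousAt.preimage_mem_nhds (Iio_mem_nhds (by linarith))
      have e4 : ∀ᶠ u in 𝓝 τs, NT κ Ap Np u < η :=
        hCNT.continuousAt.preimage_mem_nhds (Iio_mem_nhds hk4)
      have e5 : ∀ᶠ u in 𝓝 τs, OmF κ Sp St Ap Np u < η :=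
        hCOm.continuousAt.preimage_mem_nhds (Iio_mem_nhds hk5)
      exact e1.and (e2.and (e3.and (e4.and e5)))
    rw [Metric.eventually_nhds_iff] at hev
    obtain ⟨θ, hθ, hball⟩ := hev
    obtain ⟨τ₂, hτ₂mem, hτ₂gt⟩ := exists_lt_of_lt_csSup hne (show τs - θ < τs by linarith)
    have hτ₂le : τ₂ ≤ τs := le_csSup hbdd hτ₂mem
    have hdist : dist τ₂ τs < θ := by
      rw [Real.dist_eq, abs_lt]; constructor <;> linarith
    have hstrict := hball hdist
    exact hτ₂mem.2 ⟨hstrict.1.le, hstrict.2.1.le, hstrict.2.2.1.le,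
      hstrict.2.2.2.1.le, hstrict.2.2.2.2.le⟩
  -- conclusion
  obtain ⟨hk1, hk2, _, _, _⟩ := key τ hτ (fun u hu => hall u hu.2)
  rw [abs_lt]
  constructor
  · linarith
  · linarith
end
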